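/- arXiv:1210.3795 — 7 statements merged into one kernel-verified Lean document; each statement's English description precedes it below -/
import Mathlib

section
/- Let d ≥ 2, δ > 0 and α > 0. If ξ : [0,∞) → ℝ^{2d} is differentiable with ξ′(t) = F(ξ(t)) for all t ≥ 0 and ξ(0) ∈ D, then ξ(t) ∈ D for all t ≥ 0; that is, D is positively invariant under the dynamics of the vector field F. -/
open Finset

/-- The closed simplex `Δ = {u : u_i ≥ 0, ∑ u_i = 1}`. -/
def simplexSet (d : ℕ) : Set (Fin d → ℝ) :=
  {u | (∀ i, 0 ≤ u i) ∧ ∑ i, u i = 1}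

/-- `D = Δ × Δ`. -/
def Dset (d : ℕ) : Set ((Fin d → ℝ) × (Fin d → ℝ)) :=
  {z | z.1 ∈ simplexSet d ∧ z.2 ∈ simplexSet d}

/-- `π_i(x) = f_δ(x_i)^{−α} / ∑_k f_δ(x_k)^{−α}` with `f_δ(x) = max(δ, x)`. -/
noncomputable def piv (d : ℕ) (δ α : ℝ) (x : Fin d → ℝ) (i : Fin d) : ℝ :=
  (max δ (x i)) ^ (-α) / ∑ k, (max δ (x k)) ^ (-α)

/-- The vector field `F(u,v) = (−u + π(v), −v + π(u))`. -/
noncomputable def Fvec (d : ℕ) (δ α : ℝ) (z : (Fin d → ℝ) × (Fin d → ℝ)) :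
    (Fin d → ℝ) × (Fin d → ℝ) :=
  (-z.1 + piv d δ α z.2, -z.2 + piv d δ α z.1)

lemma piv_pos {d : ℕ} (hd : 0 < d) {δ : ℝ} (α : ℝ) (hδ : 0 < δ) (x : Fin d → ℝ) (i : Fin d) :
    0 < piv d δ α x i := by
  have hpos : ∀ k : Fin d, 0 < (max δ (x k)) ^ (-α) := fun k =>
    Real.rpow_pos_of_pos (lt_of_lt_of_le hδ (le_max_left _ _)) _
  have : Nonempty (Fin d) := ⟨⟨0, hd⟩⟩
  exact div_pos (hpos i) (Finset.sum_pos (fun k _ => hpos k) univ_nonempty)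

lemma sum_piv {d : ℕ} (hd : 0 < d) {δ : ℝ} (α : ℝ) (hδ : 0 < δ) (x : Fin d → ℝ) :
    ∑ i, piv d δ α x i = 1 := by
  have hpos : ∀ k : Fin d, 0 < (max δ (x k)) ^ (-α) := fun k =>
    Real.rpow_pos_of_pos (lt_of_lt_of_le hδ (le_max_left _ _)) _
  have : Nonempty (Fin d) := ⟨⟨0, hd⟩⟩
  have hS : (0:ℝ) < ∑ k, (max δ (x k)) ^ (-α) :=
    Finset.sum_pos (fun k _ => hpos k) univ_nonempty
  unfold piv
  rw [← Finset.sum_div, div_self hS.ne']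

lemma key_invariance {d : ℕ} (hd : 0 < d) {δ α : ℝ} (hδ : 0 < δ)
    (f g : ℝ → Fin d → ℝ)
    (hf : ∀ t ≥ (0:ℝ), HasDerivAt f (-(f t) + piv d δ α (g t)) t)
    (h0 : f 0 ∈ simplexSet d) : ∀ t ≥ (0:ℝ), f t ∈ simplexSet d := by
  -- component derivatives
  have hcomp : ∀ i, ∀ t ≥ (0:ℝ),
      HasDerivAt (fun s => f s i) (-(f t i) + piv d δ α (g t) i) t := by
    intro i t ht
    have := (hasDerivAt_pi.1 (hf t ht)) i
    simpa using this
  -- nonnegativity via monotonicity of e^t f_i(t)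
  intro t₀ ht₀
  refine ⟨fun i => ?_, ?_⟩
  · set φ : ℝ → ℝ := fun s => Real.exp s * f s i with hφ
    have hφd : ∀ t ≥ (0:ℝ), HasDerivAt φ (Real.exp t * piv d δ α (g t) i) t := by
      intro t ht
      have h := (Real.hasDerivAt_exp t).mul (hcomp i t ht)
      have : Real.exp t * f t i + Real.exp t * (-(f t i) + piv d δ α (g t) i)
          = Real.exp t * piv d δ α (g t) i := by ring
      rw [this] at h; exact h
    have hmono : MonotoneOn φ (Set.Ici 0) := by
      apply monotoneOn_of_deriv_nonneg (convex_Ici 0)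
      · intro t ht
        exact ((hφd t ht).continuousAt.continuousWithinAt)
      · intro t ht
        rw [interior_Ici] at ht
        exact (hφd t (le_of_lt ht)).differentiableAt.differentiableWithinAt
      · intro t ht
        rw [interior_Ici] at ht
        rw [(hφd t (le_of_lt ht)).deriv]
        exact mul_nonneg (Real.exp_pos t).le (piv_pos hd α hδ _ i).le
    have h1 : φ 0 ≤ φ t₀ := hmono Set.self_mem_Ici ht₀ ht₀
    have h2 : (0:ℝ) ≤ φ 0 := by
      simpa [hφ] using h0.1 i
    have h3 : 0 ≤ Real.exp t₀ * f t₀ i := le_trans h2 h1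
    exact nonneg_of_mul_nonneg_right h3 (Real.exp_pos t₀)
  · set ψ : ℝ → ℝ := fun s => Real.exp s * ((∑ i, f s i) - 1) with hψ
    have hψd : ∀ t ≥ (0:ℝ), HasDerivAt ψ 0 t := by
      intro t ht
      have hsum : HasDerivAt (fun s => ∑ i, f s i)
          (∑ i, (-(f t i) + piv d δ α (g t) i)) t :=
        HasDerivAt.fun_sum (fun i _ => hcomp i t ht)
      have hsum' : HasDerivAt (fun s => (∑ i, f s i) - 1)
          (∑ i, (-(f t i) + piv d δ α (g t) i)) t := hsum.sub_const 1
      have h := (Real.hasDerivAt_exp t).mul hsum'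
      have heq : ∑ i, (-(f t i) + piv d δ α (g t) i)
          = -(∑ i, f t i) + 1 := by
        rw [Finset.sum_add_distrib, ← Finset.sum_neg_distrib, sum_piv hd α hδ]
      rw [heq] at h
      have : Real.exp t * ((∑ i, f t i) - 1) + Real.exp t * (-(∑ i, f t i) + 1) = 0 := by
        ring
      rw [this] at h; exact h
    have hmono : MonotoneOn ψ (Set.Ici 0) := by
      apply monotoneOn_of_deriv_nonneg (convex_Ici 0)
      · intro s hs; exact (hψd s hs).continuousAt.continuousWithinAt
      · intro s hs; rw [interior_Ici] at hs
        exact (hψd s hs.le).differentiableAt.differentiableWithinAt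
      · intro s hs; rw [interior_Ici] at hs
        rw [(hψd s hs.le).deriv]
    have hanti : AntitoneOn ψ (Set.Ici 0) := by
      apply antitoneOn_of_deriv_nonpos (convex_Ici 0)
      · intro s hs; exact (hψd s hs).continuousAt.continuousWithinAt
      · intro s hs; rw [interior_Ici] at hs
        exact (hψd s hs.le).differentiableAt.differentiableWithinAt
      · intro s hs; rw [interior_Ici] at hs
        rw [(hψd s hs.le).deriv]
    have h1 : ψ t₀ ≤ ψ 0 := hanti Set.self_mem_Ici ht₀ ht₀
    have h2 : ψ 0 ≤ ψ t₀ := hmono Set.self_mem_Ici ht₀ ht₀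
    have h0' : ψ 0 = 0 := by simp [hψ, h0.2]
    have : ψ t₀ = 0 := le_antisymm (h0' ▸ h1) (h0' ▸ h2)
    have := mul_eq_zero.1 this
    rcases this with h | h
    · exact absurd h (Real.exp_pos t₀).ne'
    · linarith [sub_eq_zero.1 h]

/-- Proposition 10: `D` is positively invariant under the dynamics of `F`:
any solution `ξ` of `ξ′ = F(ξ)` on `[0,∞)` starting in `D` stays in `D`. -/
theorem stmt_1 (d : ℕ) (hd : 2 ≤ d) (δ α : ℝ) (hδ : 0 < δ) (hα : 0 < α)
    (ξ : ℝ → (Fin d → ℝ) × (Fin d → ℝ))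
    (hξ : ∀ t ≥ (0 : ℝ), HasDerivAt ξ (Fvec d δ α (ξ t)) t)
    (h0 : ξ 0 ∈ Dset d) :
    ∀ t ≥ (0 : ℝ), ξ t ∈ Dset d := by
  have hd0 : 0 < d := lt_of_lt_of_le (by norm_num) hd
  have h1 := key_invariance hd0 hδ (fun t => (ξ t).1) (fun t => (ξ t).2)
    (fun t ht => by
      have h := (ContinuousLinearMap.fst ℝ (Fin d → ℝ) (Fin d → ℝ)).hasFDerivAt.comp_hasDerivAt t
        (hξ t ht)
      exact (by simpa [Fvec] using h : HasDerivAt (Prod.fst ∘ ξ) (-(ξ t).1 + piv d δ α (ξ t).2) t)) h0.1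
  have h2 := key_invariance hd0 hδ (fun t => (ξ t).2) (fun t => (ξ t).1)
    (fun t ht => by
      have h := (ContinuousLinearMap.snd ℝ (Fin d → ℝ) (Fin d → ℝ)).hasFDerivAt.comp_hasDerivAt t
        (hξ t ht)
      exact (by simpa [Fvec] using h : HasDerivAt (Prod.snd ∘ ξ) (-(ξ t).2 + piv d δ α (ξ t).1) t)) h0.2
  exact fun t ht => ⟨h1 t ht, h2 t ht⟩
end

section
/- Let d ≥ 2 be an integer and α > 0. Let B be the d×d real matrix with entries B_{ij} = α/d − α·1_{i=j}, and let J be the 2d×2d block matrix J = [[−I_d, B],[B, −I_d]]. Then the characteristic polynomial of J is (λ+1)² (λ+1−α)^{d−1} (λ+1+α)^{d−1}; in particular the eigenvalues of J are exactly −1, −1+α and −1−α. -/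
open Matrix Polynomial

-- rank-one det lemma over ℝ
lemma det_smul_one_add_smul_ones (d : ℕ) (hd : 2 ≤ d) (a b : ℝ) :
    det (a • (1 : Matrix (Fin d) (Fin d) ℝ) + b • Matrix.of (fun _ _ => (1:ℝ)))
      = (a + d * b) * a ^ (d - 1) := by
  rcases eq_or_ne a 0 with rfl | ha
  · rw [zero_smul, zero_add]
    have h0 : det (b • Matrix.of (fun _ _ => (1:ℝ)) : Matrix (Fin d) (Fin d) ℝ) = 0 := by
      apply Matrix.det_zero_of_row_eq (i := ⟨0, by omega⟩) (j := ⟨1, by omega⟩)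
      · simp [Fin.ext_iff]
      · ext j; simp
    rw [h0, zero_pow (by omega), mul_zero]
  · have key : a • (1 : Matrix (Fin d) (Fin d) ℝ) + b • Matrix.of (fun _ _ => (1:ℝ))
        = a • (1 + Matrix.replicateCol Unit (fun _ => b / a) * Matrix.replicateRow Unit (fun _ => (1:ℝ))) := by
      ext i j
      simp [Matrix.mul_apply, Matrix.one_apply, mul_add, Matrix.replicateCol, Matrix.replicateRow]
      rcases eq_or_ne i j with rfl | h <;>
        · field_simp
    rw [key, Matrix.det_smul, Matrix.det_one_add_replicateCol_mul_replicateRow]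
    simp [dotProduct, Fintype.card_fin]
    have : a ^ d = a ^ (d - 1) * a := by
      rw [← pow_succ]; congr 1; omega
    rw [this]
    field_simp

-- lift to ℝ[X]
lemma det_smul_one_add_smul_ones_poly (d : ℕ) (hd : 2 ≤ d) (p q : ℝ[X]) :
    det (p • (1 : Matrix (Fin d) (Fin d) ℝ[X]) + q • Matrix.of (fun _ _ => (1:ℝ[X])))
      = (p + (d : ℝ[X]) * q) * p ^ (d - 1) := by
  apply Polynomial.funext
  intro t
  have hmap : ((p • (1 : Matrix (Fin d) (Fin d) ℝ[X]) + q • Matrix.of (fun _ _ => (1:ℝ[X]))).map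
      (evalRingHom t)) = (eval t p) • (1 : Matrix (Fin d) (Fin d) ℝ) +
        (eval t q) • Matrix.of (fun _ _ => (1:ℝ)) := by
    ext i j
    by_cases h : i = j <;>
      simp [Matrix.map_apply, Matrix.one_apply, h]
  have h1 := (RingHom.map_det (evalRingHom t)
    (p • (1 : Matrix (Fin d) (Fin d) ℝ[X]) + q • Matrix.of (fun _ _ => (1:ℝ[X]))))
  rw [RingHom.mapMatrix_apply, hmap] at h1
  simp only [coe_evalRingHom] at h1
  rw [h1, det_smul_one_add_smul_ones d hd]
  simp

-- block determinant
lemma det_fromBlocks_comm {R : Type*} [CommRing R] {m : Type*} [Fintype m] [DecidableEq m]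
    (A B : Matrix m m R) :
    det (fromBlocks A B B A) = det (A + B) * det (A - B) := by
  have key : fromBlocks (A + B) 0 B (A - B)
      = fromBlocks 1 1 0 1 * fromBlocks A B B A * fromBlocks 1 (-1) 0 1 := by
    simp [Matrix.fromBlocks_multiply]
    constructor <;> abel
  have := congrArg det key
  rw [det_mul, det_mul, det_fromBlocks_zero₂₁, det_fromBlocks_zero₂₁,
    det_fromBlocks_zero₁₂] at this
  simpa using this.symm


/-- the Jacobian `J = [[−I, B],[B, −I]]` with `B_{ij} = α/d − α·1_{i=j}`
has characteristic polynomial `(λ+1)² (λ+1−α)^{d−1} (λ+1+α)^{d−1}`, so its eigenvalues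
are exactly `−1`, `−1+α` and `−1−α`. -/
theorem stmt_2 (d : ℕ) (hd : 2 ≤ d) (α : ℝ) (hα : 0 < α)
    (B : Matrix (Fin d) (Fin d) ℝ)
    (hB : ∀ i j, B i j = α / d - if i = j then α else 0)
    (J : Matrix (Fin d ⊕ Fin d) (Fin d ⊕ Fin d) ℝ)
    (hJ : J = Matrix.fromBlocks (-1) B B (-1)) :
    J.charpoly = (X + C 1) ^ 2 * (X + C (1 - α)) ^ (d - 1) * (X + C (1 + α)) ^ (d - 1) ∧
      spectrum ℝ J = {-1, -1 + α, -1 - α} := by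
  have hd0 : (d : ℝ) ≠ 0 := by
    have : 0 < d := by omega
    exact_mod_cast this.ne'
  have hBm : B.map C = C (α / d) • Matrix.of (fun _ _ => (1 : ℝ[X])) - C α • 1 := by
    refine Matrix.ext fun i j => ?_
    by_cases h : i = j <;>
      simp [hB, h, Matrix.one_apply, map_sub, apply_ite C]
  have hA : charmatrix (-1 : Matrix (Fin d) (Fin d) ℝ)
      = (X + C 1 : ℝ[X]) • (1 : Matrix (Fin d) (Fin d) ℝ[X]) := by
    refine Matrix.ext fun i j => ?_
    by_cases h : i = j
    · subst h; simp [charmatrix_apply_eq, Matrix.one_apply]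
    · simp [charmatrix_apply_ne _ _ _ h, Matrix.one_apply, h]
  have hdq : (d : ℝ[X]) * C (α / d) = C α := by
    rw [← Polynomial.C_eq_natCast, ← C_mul]
    congr 1
    field_simp
  have hM1 : (X + C 1 : ℝ[X]) • (1 : Matrix (Fin d) (Fin d) ℝ[X]) - B.map C
      = (X + C (1 + α) : ℝ[X]) • (1 : Matrix (Fin d) (Fin d) ℝ[X])
        + (-C (α / d) : ℝ[X]) • Matrix.of (fun _ _ => (1 : ℝ[X])) := by
    rw [hBm]
    have h1 : (X + C (1 + α) : ℝ[X]) = (X + C 1) + C α := by rw [map_add]; ring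
    rw [h1, add_smul]
    module
  have hM2 : (X + C 1 : ℝ[X]) • (1 : Matrix (Fin d) (Fin d) ℝ[X]) + B.map C
      = (X + C (1 - α) : ℝ[X]) • (1 : Matrix (Fin d) (Fin d) ℝ[X])
        + (C (α / d) : ℝ[X]) • Matrix.of (fun _ _ => (1 : ℝ[X])) := by
    rw [hBm]
    have h1 : (X + C (1 - α) : ℝ[X]) = (X + C 1) - C α := by rw [map_sub]; ring
    rw [h1, sub_smul]
    module
  have hchar : J.charpoly
      = (X + C 1) ^ 2 * (X + C (1 - α)) ^ (d - 1) * (X + C (1 + α)) ^ (d - 1) := by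
    rw [hJ, Matrix.charpoly, charmatrix_fromBlocks, det_fromBlocks_comm, hA,
      ← sub_eq_add_neg, sub_neg_eq_add, hM1, hM2,
      det_smul_one_add_smul_ones_poly d hd, det_smul_one_add_smul_ones_poly d hd]
    rw [mul_neg, hdq]
    have e1 : (X + C (1 + α) + -C α : ℝ[X]) = X + C 1 := by rw [map_add]; ring
    have e2 : (X + C (1 - α) + C α : ℝ[X]) = X + C 1 := by
      rw [map_sub]; ring
    rw [e1, e2]
    ring
  refine ⟨hchar, ?_⟩
  have key : ∀ μ : ℝ, eval μ J.charpoly = ((algebraMap ℝ _ μ) - J).det := by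
    intro μ
    rw [Matrix.charpoly]
    have h1 := RingHom.map_det (evalRingHom μ) (charmatrix J)
    rw [RingHom.mapMatrix_apply, coe_evalRingHom] at h1
    rw [h1]
    congr 1
    refine Matrix.ext fun i j => ?_
    by_cases h : i = j
    · subst h
      simp [charmatrix_apply_eq, Matrix.algebraMap_matrix_apply]
    · simp [charmatrix_apply_ne _ _ _ h, Matrix.algebraMap_matrix_apply, h]
  ext μ
  rw [spectrum.mem_iff, Matrix.isUnit_iff_isUnit_det, isUnit_iff_ne_zero, not_not,
    ← key μ, hchar]
  simp only [eval_mul, eval_pow, eval_add, eval_X, eval_C, mul_eq_zero,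
    pow_eq_zero_iff (by norm_num : (2:ℕ) ≠ 0), pow_eq_zero_iff (show d - 1 ≠ 0 by omega),
    Set.mem_insert_iff, Set.mem_singleton_iff]
  constructor
  · rintro ((h | h) | h)
    · left; linarith
    · right; left; linarith
    · right; right; linarith
  · rintro (h | h | h)
    · left; left; linarith
    · left; right; linarith
    · right; linarith
end

section
/- Let d ≥ 2 be an integer and α > 0. Let B be the d×d real matrix with entries B_{ij} = α/d − α·1_{i=j}, and let J be the 2d×2d block matrix J = [[−I_d, B],[B, −I_d]]. If α > 1 then α − 1 > 0 is an eigenvalue of J (so (U,U) is a linearly unstable critical point); if 0 < α < 1 then every complex eigenvalue of J has strictly negative real part (so (U,U) is an attracting point). -/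
open Matrix

private lemma sum_row {K : Type*} [Field K] {d : ℕ} (i : Fin d) (a b : K) (x : Fin d → K) :
    ∑ j, (a - if i = j then b else 0) * x j = a * (∑ j, x j) - b * x i := by
  simp [sub_mul, Finset.sum_sub_distrib, ite_mul, Finset.mul_sum]

/-- for the Jacobian `J = [[−I, B],[B, −I]]` with `B_{ij} = α/d − α·1_{i=j}`:
if `α > 1` then `α − 1 > 0` is an eigenvalue of `J` (linear instability of `(U,U)`);
if `0 < α < 1` then every complex eigenvalue of `J` has strictly negative real part
(`(U,U)` is attracting). -/
theorem stmt_3 (d : ℕ) (hd : 2 ≤ d) (α : ℝ) (hα : 0 < α)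
    (B : Matrix (Fin d) (Fin d) ℝ)
    (hB : ∀ i j, B i j = α / d - if i = j then α else 0)
    (J : Matrix (Fin d ⊕ Fin d) (Fin d ⊕ Fin d) ℝ)
    (hJ : J = Matrix.fromBlocks (-1) B B (-1)) :
    (1 < α → 0 < α - 1 ∧ (α - 1) ∈ spectrum ℝ J) ∧
      (α < 1 → ∀ μ ∈ spectrum ℂ (J.map (Complex.ofReal · )), μ.re < 0) := by
  have hd0 : (d : ℝ) ≠ 0 := by positivity
  constructor
  · -- instability part
    intro hα1
    refine ⟨by linarith, ?_⟩
    rw [spectrum.mem_iff, Matrix.isUnit_iff_isUnit_det, isUnit_iff_ne_zero, not_not,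
      ← Matrix.exists_mulVec_eq_zero_iff]
    set i0 : Fin d := ⟨0, by omega⟩
    set i1 : Fin d := ⟨1, by omega⟩
    have hne : i0 ≠ i1 := by simp [i0, i1, Fin.ext_iff]
    set x : Fin d → ℝ := fun j => (if j = i0 then (1:ℝ) else 0) - (if j = i1 then 1 else 0) with hx
    have hxsum : ∑ j, x j = 0 := by
      simp [hx, Finset.sum_sub_distrib]
    refine ⟨Sum.elim x (fun j => -x j), ?_, ?_⟩
    · intro h
      have h0 : x i0 = 0 := congrFun h (Sum.inl i0)
      simp [hx, hne] at h0
    · funext k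
      cases k with
      | inl i =>
        simp only [Matrix.mulVec, dotProduct, Fintype.sum_sum_type, Sum.elim_inl,
          Sum.elim_inr, Matrix.sub_apply, Matrix.algebraMap_matrix_apply, hJ,
          Matrix.fromBlocks_apply₁₁, Matrix.fromBlocks_apply₁₂, Matrix.neg_apply,
          Matrix.one_apply, hB, Pi.zero_apply]
        have : ∀ j, (α / d - if i = j then α else 0) * x j
            = (α / d - if i = j then α else 0) * x j := fun _ => rfl
        rw [show (∑ j, ((if Sum.inl i = Sum.inl j then algebraMap ℝ ℝ (α - 1) else 0) -
            -(if i = j then 1 else 0)) * x j)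
          = ∑ j, ((if i = j then α - 1 else 0) - (-(if i = j then (1:ℝ) else 0))) * x j from by
            simp, show (∑ j, ((if Sum.inl i = Sum.inr j then algebraMap ℝ ℝ (α - 1) else 0) -
            (α / ↑d - if i = j then α else 0)) * (-x j))
          = ∑ j, (α / ↑d - if i = j then α else 0) * x j from by
            congr 1; funext j; simp; try ring]
        rw [sum_row i (α / d) α x, hxsum]
        have h1 : ∑ j, ((if i = j then α - 1 else 0) - (-(if i = j then (1:ℝ) else 0))) * x j
            = α * x i := by
          rw [show (fun j => ((if i = j then α - 1 else 0) - (-(if i = j then (1:ℝ) else 0))) * x j)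
            = fun j => (if i = j then α * x j else 0) from by
              funext j; by_cases h : i = j <;> simp [h]]
          simp
        rw [h1]; ring
      | inr i =>
        simp only [Matrix.mulVec, dotProduct, Fintype.sum_sum_type, Sum.elim_inl,
          Sum.elim_inr, Matrix.sub_apply, Matrix.algebraMap_matrix_apply, hJ,
          Matrix.fromBlocks_apply₂₁, Matrix.fromBlocks_apply₂₂, Matrix.neg_apply,
          Matrix.one_apply, hB, Pi.zero_apply]
        rw [show (∑ j, ((if Sum.inr i = Sum.inl j then algebraMap ℝ ℝ (α - 1) else 0) -
            (α / ↑d - if i = j then α else 0)) * x j)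
          = ∑ j, -((α / ↑d - if i = j then α else 0) * x j) from by
            congr 1; funext j; simp; try ring,
          show (∑ j, ((if Sum.inr i = Sum.inr j then algebraMap ℝ ℝ (α - 1) else 0) -
            -(if i = j then 1 else 0)) * (-x j))
          = ∑ j, -(((if i = j then α - 1 else 0) - (-(if i = j then (1:ℝ) else 0))) * x j) from by
            congr 1; funext j; simp; try ring]
        rw [Finset.sum_neg_distrib, Finset.sum_neg_distrib, sum_row i (α / d) α x, hxsum]
        have h1 : ∑ j, ((if i = j then α - 1 else 0) - (-(if i = j then (1:ℝ) else 0))) * x j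
            = α * x i := by
          rw [show (fun j => ((if i = j then α - 1 else 0) - (-(if i = j then (1:ℝ) else 0))) * x j)
            = fun j => (if i = j then α * x j else 0) from by
              funext j; by_cases h : i = j <;> simp [h]]
          simp
        rw [h1]; ring
  · -- stability part
    intro hα1 μ hμ
    rw [spectrum.mem_iff, Matrix.isUnit_iff_isUnit_det, isUnit_iff_ne_zero, not_not,
      ← Matrix.exists_mulVec_eq_zero_iff] at hμ
    obtain ⟨v, hv0, hvz⟩ := hμ
    set x : Fin d → ℂ := fun i => v (Sum.inl i) with hx
    set y : Fin d → ℂ := fun i => v (Sum.inr i) with hy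
    have hdC : (d : ℂ) ≠ 0 := by exact_mod_cast Nat.cast_ne_zero.mpr (by omega)
    -- the two eigenvector equations
    have h1 : ∀ i, (μ + 1) * x i = ((α : ℂ) / d) * (∑ j, y j) - α * y i := by
      intro i
      have := congrFun hvz (Sum.inl i)
      simp only [Matrix.mulVec, dotProduct, Fintype.sum_sum_type,
        Matrix.sub_apply, Matrix.algebraMap_matrix_apply, hJ, Matrix.map_apply,
        Matrix.fromBlocks_apply₁₁, Matrix.fromBlocks_apply₁₂, Matrix.neg_apply,
        Matrix.one_apply, hB, Pi.zero_apply] at this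
      rw [show (∑ j, ((if Sum.inl i = Sum.inl j then algebraMap ℂ ℂ μ else 0) -
          (((-(if i = j then (1:ℝ) else 0)) : ℝ) : ℂ)) * v (Sum.inl j))
        = ∑ j, (if i = j then (μ+1) * x j else 0) from by
          congr 1; funext j; by_cases h : i = j <;> simp [h, hx] <;> ring,
        show (∑ j, ((if Sum.inl i = Sum.inr j then algebraMap ℂ ℂ μ else 0) -
          (((α / ↑d - if i = j then α else 0 : ℝ)) : ℂ)) * v (Sum.inr j))
        = ∑ j, ((0 : ℂ) - ((α:ℂ) / d - if i = j then (α:ℂ) else 0)) * y j from by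
          congr 1; funext j; by_cases h : i = j <;> simp [h, hy] <;> push_cast <;> ring] at this
      simp only [Finset.sum_ite_eq, Finset.mem_univ, if_true] at this
      have h2 : ∑ j, ((0 : ℂ) - ((α:ℂ) / d - if i = j then (α:ℂ) else 0)) * y j
          = -(((α:ℂ) / d) * (∑ j, y j) - α * y i) := by
        rw [show (fun j => ((0 : ℂ) - ((α:ℂ) / d - if i = j then (α:ℂ) else 0)) * y j)
          = fun j => -((( (α:ℂ) / d - if i = j then (α:ℂ) else 0)) * y j) from by
            funext j; ring]
        rw [Finset.sum_neg_distrib, sum_row i ((α:ℂ)/d) (α:ℂ) y]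
      rw [h2] at this
      linear_combination this
    have h2 : ∀ i, (μ + 1) * y i = ((α : ℂ) / d) * (∑ j, x j) - α * x i := by
      intro i
      have := congrFun hvz (Sum.inr i)
      simp only [Matrix.mulVec, dotProduct, Fintype.sum_sum_type,
        Matrix.sub_apply, Matrix.algebraMap_matrix_apply, hJ, Matrix.map_apply,
        Matrix.fromBlocks_apply₂₁, Matrix.fromBlocks_apply₂₂, Matrix.neg_apply,
        Matrix.one_apply, hB, Pi.zero_apply] at this
      rw [show (∑ j, ((if Sum.inr i = Sum.inr j then algebraMap ℂ ℂ μ else 0) -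
          (((-(if i = j then (1:ℝ) else 0)) : ℝ) : ℂ)) * v (Sum.inr j))
        = ∑ j, (if i = j then (μ+1) * y j else 0) from by
          congr 1; funext j; by_cases h : i = j <;> simp [h, hy] <;> ring,
        show (∑ j, ((if Sum.inr i = Sum.inl j then algebraMap ℂ ℂ μ else 0) -
          (((α / ↑d - if i = j then α else 0 : ℝ)) : ℂ)) * v (Sum.inl j))
        = ∑ j, ((0 : ℂ) - ((α:ℂ) / d - if i = j then (α:ℂ) else 0)) * x j from by
          congr 1; funext j; by_cases h : i = j <;> simp [h, hx] <;> push_cast <;> ring] at this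
      simp only [Finset.sum_ite_eq, Finset.mem_univ, if_true] at this
      have h2 : ∑ j, ((0 : ℂ) - ((α:ℂ) / d - if i = j then (α:ℂ) else 0)) * x j
          = -(((α:ℂ) / d) * (∑ j, x j) - α * x i) := by
        rw [show (fun j => ((0 : ℂ) - ((α:ℂ) / d - if i = j then (α:ℂ) else 0)) * x j)
          = fun j => -((( (α:ℂ) / d - if i = j then (α:ℂ) else 0)) * x j) from by
            funext j; ring]
        rw [Finset.sum_neg_distrib, sum_row i ((α:ℂ)/d) (α:ℂ) x]
      rw [h2] at this
      linear_combination this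
    by_cases hμ1 : μ = -1
    · simp [hμ1]
    have hμ1' : μ + 1 ≠ 0 := fun h => hμ1 (by linear_combination h)
    -- sums vanish
    have hSx : ∑ j, x j = 0 := by
      have : (μ + 1) * ∑ j, x j = 0 := by
        rw [Finset.mul_sum]
        calc ∑ i, (μ + 1) * x i = ∑ i, (((α : ℂ) / d) * (∑ j, y j) - α * y i) := by
              exact Finset.sum_congr rfl fun i _ => h1 i
          _ = (d : ℂ) * (((α : ℂ) / d) * (∑ j, y j)) - α * ∑ j, y j := by
              rw [Finset.sum_sub_distrib, Finset.sum_const, Finset.card_univ, Fintype.card_fin,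
                ← Finset.mul_sum]
              simp [nsmul_eq_mul]
          _ = 0 := by field_simp; try ring
      exact (mul_eq_zero.1 this).resolve_left hμ1'
    have hSy : ∑ j, y j = 0 := by
      have : (μ + 1) * ∑ j, y j = 0 := by
        rw [Finset.mul_sum]
        calc ∑ i, (μ + 1) * y i = ∑ i, (((α : ℂ) / d) * (∑ j, x j) - α * x i) := by
              exact Finset.sum_congr rfl fun i _ => h2 i
          _ = (d : ℂ) * (((α : ℂ) / d) * (∑ j, x j)) - α * ∑ j, x j := by
              rw [Finset.sum_sub_distrib, Finset.sum_const, Finset.card_univ, Fintype.card_fin,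
                ← Finset.mul_sum]
              simp [nsmul_eq_mul]
          _ = 0 := by field_simp; try ring
      exact (mul_eq_zero.1 this).resolve_left hμ1'
    have h1' : ∀ i, (μ + 1) * x i = -α * y i := by
      intro i; rw [h1 i, hSy]; ring
    have h2' : ∀ i, (μ + 1) * y i = -α * x i := by
      intro i; rw [h2 i, hSx]; ring
    -- (μ+1)^2 = α^2
    have key : (μ + 1) ^ 2 = (α : ℂ) ^ 2 := by
      obtain ⟨k, hk⟩ := Function.ne_iff.1 hv0
      cases k with
      | inl i =>
        have hxk : ((μ + 1) ^ 2 - (α:ℂ)^2) * x i = 0 := by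
          have e1 := h1' i; have e2 := h2' i
          linear_combination (μ + 1) * e1 - α * e2
        have : x i ≠ 0 := hk
        have := (mul_eq_zero.1 hxk).resolve_right this
        linear_combination this
      | inr i =>
        have hyk : ((μ + 1) ^ 2 - (α:ℂ)^2) * y i = 0 := by
          have e1 := h1' i; have e2 := h2' i
          linear_combination (μ + 1) * e2 - α * e1
        have : y i ≠ 0 := hk
        have := (mul_eq_zero.1 hyk).resolve_right this
        linear_combination this
    have hfac : (μ + 1 - α) * (μ + 1 + α) = 0 := by linear_combination key
    rcases mul_eq_zero.1 hfac with h | h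
    · have : μ = (α : ℂ) - 1 := by linear_combination h
      rw [this]
      simp only [Complex.sub_re, Complex.ofReal_re, Complex.one_re]
      linarith
    · have : μ = -(α : ℂ) - 1 := by linear_combination h
      rw [this]
      simp only [Complex.sub_re, Complex.neg_re, Complex.ofReal_re, Complex.one_re]
      linarith
end

section
/- For every integer d ≥ 3 there exists α₀ > 0 such that for every α > α₀ and every δ > 0 with 2 d^{1/(α+1)} δ ≤ 1/d the following holds: for every (u,v) ∈ D with ∑_{i=1}^d u_i v_i ≥ (3/2) d^{1/(α+1)} δ, one has −2 ∑_{i=1}^d u_i v_i + (∑_{i=1}^d u_i f_δ(u_i)^{−α})/(∑_{k=1}^d f_δ(u_k)^{−α}) + (∑_{i=1}^d v_i f_δ(v_i)^{−α})/(∑_{k=1}^d f_δ(v_k)^{−α}) ≤ 0, and equality holds if and only if u = v = (1/d, …, 1/d). (This expression is the derivative dH/dt of H(u,v) = ∑ u_i v_i along the flow of F.) -/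
set_option maxHeartbeats 1000000


open Finset

/-- `f_δ(x) = max(δ, x)`. -/
noncomputable def fdel (δ x : ℝ) : ℝ := max δ x

/-- The derivative `dH/dt` of `H(u,v) = ∑ u_i v_i` along the flow of `F`:
`−2 ∑ u_i v_i + (∑ u_i f_δ(u_i)^{−α})/(∑ f_δ(u_k)^{−α}) + (∑ v_i f_δ(v_i)^{−α})/(∑ f_δ(v_k)^{−α})`. -/
noncomputable def dHdt (d : ℕ) (δ α : ℝ) (u v : Fin d → ℝ) : ℝ :=
  -2 * ∑ i, u i * v i +
    (∑ i, u i * fdel δ (u i) ^ (-α)) / (∑ k, fdel δ (u k) ^ (-α)) +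
    (∑ i, v i * fdel δ (v i) ^ (-α)) / (∑ k, fdel δ (v k) ^ (-α))


namespace Stmt4Aux

noncomputable def Gq (d : ℕ) (δ α : ℝ) (u : Fin d → ℝ) : ℝ :=
  (∑ i, u i * fdel δ (u i) ^ (-α)) / (∑ k, fdel δ (u k) ^ (-α))

lemma dHdt_eq (d : ℕ) (δ α : ℝ) (u v : Fin d → ℝ) :
    dHdt d δ α u v = -2 * (∑ i, u i * v i) + Gq d δ α u + Gq d δ α v := rfl

lemma fdel_pos {δ x : ℝ} (hδ : 0 < δ) : 0 < fdel δ x := lt_of_lt_of_le hδ (le_max_left _ _)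

lemma fdel_eq {δ x : ℝ} (h : δ ≤ x) : fdel δ x = x := max_eq_right h

lemma wt_pos {δ α x : ℝ} (hδ : 0 < δ) : 0 < fdel δ x ^ (-α) :=
  Real.rpow_pos_of_pos (fdel_pos hδ) _

lemma Wpos {d : ℕ} [NeZero d] {δ α : ℝ} (hδ : 0 < δ) (u : Fin d → ℝ) :
    0 < ∑ k, fdel δ (u k) ^ (-α) :=
  Finset.sum_pos (fun k _ => wt_pos hδ) univ_nonempty

lemma G_lt {d : ℕ} [NeZero d] {δ α T : ℝ} (hδ : 0 < δ) (u : Fin d → ℝ)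
    (h : ∑ i, fdel δ (u i) ^ (-α) * (u i - T) < 0) : Gq d δ α u < T := by
  have hW := Wpos (α := α) hδ u
  rw [Gq, div_lt_iff₀ hW]
  have hid : ∑ i, fdel δ (u i) ^ (-α) * (u i - T)
      = (∑ i, u i * fdel δ (u i) ^ (-α)) - T * ∑ k, fdel δ (u k) ^ (-α) := by
    rw [Finset.mul_sum, ← Finset.sum_sub_distrib]
    exact Finset.sum_congr rfl fun i _ => by ring
  linarith [hid ▸ h]

/-- Bernoulli. -/
lemma bern {α s : ℝ} (hα : 1 ≤ α) (hs : 0 ≤ s) : 1 + α * s ≤ (1 + s) ^ α :=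
  one_add_mul_self_le_rpow_one_add (by linarith) hα

lemma bern_inv {α r : ℝ} (hα : 1 ≤ α) (hr0 : 0 < r) (hr1 : r ≤ 1) :
    1 + α * (1 - r) ≤ r ^ (-α) := by
  have hs : 0 ≤ (1 - r) / r := by
    apply div_nonneg (by linarith) hr0.le
  have h1 : 1 + α * ((1 - r) / r) ≤ (1 + (1 - r) / r) ^ α := bern hα hs
  have h2 : (1 : ℝ) + (1 - r) / r = r⁻¹ := by field_simp; ring
  have h3 : r⁻¹ ^ α = r ^ (-α) := by
    rw [Real.inv_rpow hr0.le, Real.rpow_neg hr0.le]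
  rw [h2, h3] at h1
  have h4 : 1 - r ≤ (1 - r) / r := by
    rw [le_div_iff₀ hr0]
    nlinarith
  nlinarith


/-- tangent-line estimate for `t ↦ t^{-α}`. -/
lemma tangent {α c C t : ℝ} (hα : 1 ≤ α) (hc : 0 < c) (ht : 0 < t) (htC : t ≤ C) (hcC : c ≤ C) :
    t ^ (-α) * (t - c) ≤ c ^ (-α) * (t - c) - α * C ^ (-(α + 1)) * (t - c) ^ 2 := by
  have hC : 0 < C := lt_of_lt_of_le hc hcC
  have hCp : 0 < C ^ (-(α + 1)) := Real.rpow_pos_of_pos hC _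
  have htp : 0 < t ^ (-α) := Real.rpow_pos_of_pos ht _
  have hcp : 0 < c ^ (-α) := Real.rpow_pos_of_pos hc _
  rcases le_total c t with h | h
  · -- c ≤ t : use r = c/t
    have hr0 : 0 < c / t := by positivity
    have hr1 : c / t ≤ 1 := by rw [div_le_one ht]; exact h
    have hb := bern_inv hα hr0 hr1
    have he : (c / t) ^ (-α) = c ^ (-α) / t ^ (-α) := Real.div_rpow hc.le ht.le _
    rw [he] at hb
    have h1 : t ^ (-α) * (1 + α * (1 - c / t)) ≤ c ^ (-α) := by
      calc t ^ (-α) * (1 + α * (1 - c / t)) ≤ t ^ (-α) * (c ^ (-α) / t ^ (-α)) :=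
            mul_le_mul_of_nonneg_left hb htp.le
        _ = c ^ (-α) := by field_simp
    have h2 : t ^ (-α) / t = t ^ (-(α + 1)) := by
      rw [show -(α + 1) = -α - 1 by ring, Real.rpow_sub ht, Real.rpow_one]
    have heq : t ^ (-α) * (α * (1 - c / t)) = α * (t - c) * t ^ (-(α + 1)) := by
      rw [← h2]; field_simp
    have hA : c ^ (-α) - t ^ (-α) ≥ α * (t - c) * t ^ (-(α + 1)) := by nlinarith
    have h3 : C ^ (-(α + 1)) ≤ t ^ (-(α + 1)) :=
      Real.rpow_le_rpow_of_nonpos ht htC (by linarith)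
    have hB : (t - c) * (c ^ (-α) - t ^ (-α)) ≥ α * (t - c) ^ 2 * t ^ (-(α + 1)) := by
      nlinarith [Real.rpow_pos_of_pos ht (-(α+1))]
    nlinarith [mul_le_mul_of_nonneg_left h3 (mul_nonneg (by linarith : (0:ℝ) ≤ α) (sq_nonneg (t - c)))]
  · -- t ≤ c : use r = t/c
    have hr0 : 0 < t / c := by positivity
    have hr1 : t / c ≤ 1 := by rw [div_le_one hc]; exact h
    have hb := bern_inv hα hr0 hr1
    have he : (t / c) ^ (-α) = t ^ (-α) / c ^ (-α) := Real.div_rpow ht.le hc.le _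
    rw [he] at hb
    have h1 : c ^ (-α) * (1 + α * (1 - t / c)) ≤ t ^ (-α) := by
      calc c ^ (-α) * (1 + α * (1 - t / c)) ≤ c ^ (-α) * (t ^ (-α) / c ^ (-α)) :=
            mul_le_mul_of_nonneg_left hb hcp.le
        _ = t ^ (-α) := by field_simp
    have h2 : c ^ (-α) / c = c ^ (-(α + 1)) := by
      rw [show -(α + 1) = -α - 1 by ring, Real.rpow_sub hc, Real.rpow_one]
    have heq : c ^ (-α) * (α * (1 - t / c)) = α * (c - t) * c ^ (-(α + 1)) := by
      rw [← h2]; field_simp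
    have hA : t ^ (-α) - c ^ (-α) ≥ α * (c - t) * c ^ (-(α + 1)) := by nlinarith
    have h3 : C ^ (-(α + 1)) ≤ c ^ (-(α + 1)) :=
      Real.rpow_le_rpow_of_nonpos hc hcC (by linarith)
    have hB : (c - t) * (t ^ (-α) - c ^ (-α)) ≥ α * (c - t) ^ 2 * c ^ (-(α + 1)) := by
      nlinarith [Real.rpow_pos_of_pos hc (-(α+1))]
    nlinarith [mul_le_mul_of_nonneg_left h3 (mul_nonneg (by linarith : (0:ℝ) ≤ α) (sq_nonneg (t - c)))]

/-- CLAIM I: threshold bound. -/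
lemma claimI {d : ℕ} [NeZero d] {δ α γ ρ : ℝ} (hδ : 0 < δ) (hδρ : δ ≤ ρ) (hρ : 0 < ρ)
    (hγ : 0 < γ) (hα : 1 ≤ α)
    (hcond : (d : ℝ) * (1 + γ) ^ ((1 : ℝ) - α) < γ)
    (u : Fin d → ℝ) {j : Fin d} (hj : ∀ i, u j ≤ u i) :
    Gq d δ α u < (1 + γ) * max (u j) ρ := by
  set M := max (u j) ρ with hMdef
  have hM0 : 0 < M := lt_max_of_lt_right hρ
  have hMj : u j ≤ M := le_max_left _ _
  have hMρ : ρ ≤ M := le_max_right _ _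
  set T := (1 + γ) * M with hTdef
  have hT0 : 0 < T := by positivity
  have hMT : M < T := by nlinarith
  have hTδ : δ ≤ T := le_trans hδρ (le_trans hMρ hMT.le)
  apply G_lt hδ
  rw [← Finset.add_sum_erase _ _ (Finset.mem_univ j)]
  have hMαpos : 0 < M ^ (-α) := Real.rpow_pos_of_pos hM0 _
  have hTαpos : 0 < T ^ (-α) := Real.rpow_pos_of_pos hT0 _
  -- j-term
  have hjterm : fdel δ (u j) ^ (-α) * (u j - T) ≤ -(γ * (M ^ (-α) * M)) := by
    have hwj : M ^ (-α) ≤ fdel δ (u j) ^ (-α) := by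
      apply Real.rpow_le_rpow_of_nonpos (fdel_pos hδ) _ (by linarith)
      exact max_le (le_trans hδρ hMρ) hMj
    have h1 : u j - T ≤ -(γ * M) := by nlinarith
    have h2 : fdel δ (u j) ^ (-α) * (u j - T) ≤ M ^ (-α) * (u j - T) :=
      mul_le_mul_of_nonpos_right hwj (by nlinarith)
    nlinarith
  -- other terms
  have hother : ∀ k ∈ Finset.univ.erase j, fdel δ (u k) ^ (-α) * (u k - T) ≤ T ^ (-α) * T := by
    intro k _
    rcases le_or_gt (u k) T with h | h
    · have h1 := wt_pos (x := u k) (α := α) hδ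
      nlinarith
    · have hfd : fdel δ (u k) = u k := fdel_eq (le_trans hTδ h.le)
      rw [hfd]
      have hu0 : 0 < u k := lt_trans hT0 h
      have h1 : u k ^ (-α) * (u k - T) ≤ u k ^ (-α) * u k := by
        have := Real.rpow_pos_of_pos hu0 (-α)
        nlinarith
      have h2 : u k ^ (-α) * u k = u k ^ (-α + 1) := (Real.rpow_add_one hu0.ne' _).symm
      have h3 : u k ^ (-α + 1) ≤ T ^ (-α + 1) :=
        Real.rpow_le_rpow_of_nonpos hT0 h.le (by linarith)
      have h4 : T ^ (-α + 1) = T ^ (-α) * T := Real.rpow_add_one hT0.ne' _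
      linarith
  have hcard : (Finset.univ.erase j).card = d - 1 := by
    rw [Finset.card_erase_of_mem (Finset.mem_univ j), Finset.card_univ, Fintype.card_fin]
  have hd1 : 1 ≤ d := Nat.one_le_iff_ne_zero.mpr (NeZero.ne d)
  have hsum : ∑ k ∈ Finset.univ.erase j, fdel δ (u k) ^ (-α) * (u k - T)
      ≤ ((d : ℝ) - 1) * (T ^ (-α) * T) := by
    have h := Finset.sum_le_card_nsmul _ _ _ hother
    rw [hcard, nsmul_eq_mul] at h
    rwa [Nat.cast_sub hd1, Nat.cast_one] at h
  -- final arithmetic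
  have hTsplit : T ^ (-α) * T = (1 + γ) ^ ((1:ℝ) - α) * (M ^ (-α) * M) := by
    have h1 : T ^ (-α) = (1 + γ) ^ (-α) * M ^ (-α) := by
      rw [hTdef, Real.mul_rpow (by linarith) hM0.le]
    have h2 : (1 + γ) ^ (-α) * (1 + γ) = (1 + γ) ^ (-α + 1) :=
      (Real.rpow_add_one (by linarith : (1:ℝ) + γ ≠ 0) _).symm
    have h3 : ((1:ℝ) + γ) ^ (-α + 1) = (1 + γ) ^ ((1:ℝ) - α) := by ring_nf
    rw [h1, hTdef]
    rw [← h3, ← h2]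
    ring
  have hγpos : 0 < (1 + γ) ^ ((1:ℝ) - α) := Real.rpow_pos_of_pos (by linarith) _
  have hfin : ((d : ℝ) - 1) * (T ^ (-α) * T) < γ * (M ^ (-α) * M) := by
    rw [hTsplit]
    have hMM : 0 < M ^ (-α) * M := by positivity
    have : ((d:ℝ) - 1) * (1 + γ) ^ ((1:ℝ) - α) < γ := by
      have hd0 : (0:ℝ) ≤ (d:ℝ) := Nat.cast_nonneg d
      nlinarith
    nlinarith
  linarith

/-- CLAIM II : near-uniform curvature bound, strict version. -/
lemma claimII {d : ℕ} (hd3 : 3 ≤ d) {δ α : ℝ} (hδ : 0 < δ)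
    (hδd : δ ≤ 1 / (2 * (d : ℝ)))
    (hαexp : Real.exp (2 * (d : ℝ) * (4 * (d : ℝ) ^ 2 + 4)) < α)
    (u : Fin d → ℝ) (hu0 : ∀ i, 0 ≤ u i) (hu1 : ∑ i, u i = 1)
    (hmin : ∀ i, 1 / (d : ℝ) - 1 / (2 * (d : ℝ) * ((d : ℝ) - 1) ^ 2) ≤ u i)
    (hne : ∃ i, u i ≠ 1 / (d : ℝ)) :
    Gq d δ α u < 1 / (d : ℝ) - ∑ i, (u i - 1 / (d : ℝ)) ^ 2 := by
  haveI : NeZero d := ⟨by omega⟩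
  have hDcast : ((d : ℝ)) = (d : ℝ) := rfl
  set D := (d : ℝ) with hDdef
  have hD : (3 : ℝ) ≤ D := by rw [hDdef]; exact_mod_cast hd3
  clear_value D
  have hD0 : 0 < D := by linarith
  set β := 4 * D ^ 2 + 4 with hβdef
  clear_value β
  have hβ40 : 40 ≤ β := by rw [hβdef]; nlinarith
  have hexpβ : 1 + 2 * D * β ≤ Real.exp (2 * D * β) := by
    have := Real.add_one_le_exp (2 * D * β); linarith
  have hα3β : 3 * β ≤ α := by nlinarith
  have hα1 : 1 ≤ α := by nlinarith
  set c := 1 / D with hcdef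
  clear_value c
  have hc0 : 0 < c := by rw [hcdef]; positivity
  have hDc : D * c = 1 := by rw [hcdef]; field_simp
  set κ := 1 / (2 * D * (D - 1) ^ 2) with hκdef
  clear_value κ
  have hden : (0:ℝ) < 2 * D * (D - 1) ^ 2 := by nlinarith
  have hκ0 : 0 < κ := by rw [hκdef]; exact one_div_pos.mpr hden
  have hκc : κ ≤ c / 4 := by
    rw [hκdef, hcdef, div_le_div_iff₀ hden (by positivity)]
    nlinarith
  have hδc2 : δ ≤ c / 2 := by
    have h1 : 1 / (2 * D) = c / 2 := by rw [hcdef]; ring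
    linarith [h1 ▸ hδd]
  -- min coordinate
  obtain ⟨j, -, hjmem⟩ := Finset.exists_min_image Finset.univ u univ_nonempty
  have hj : ∀ i, u j ≤ u i := fun i => hjmem i (mem_univ i)
  set m := u j with hmdef
  clear_value m
  have hjm : ∀ i, m ≤ u i := hj
  have hmc : m ≤ c := by
    have h1 : ((Finset.univ : Finset (Fin d)).card : ℝ) * m ≤ ∑ i, u i := by
      have := Finset.card_nsmul_le_sum Finset.univ u m (fun i _ => hjm i)
      rwa [nsmul_eq_mul] at this
    rw [hu1, Finset.card_univ, Fintype.card_fin, ← hDdef] at h1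
    nlinarith
  set g := c - m with hgdef
  clear_value g
  have hg0 : 0 ≤ g := by rw [hgdef]; linarith
  have hgκ : g ≤ κ := by
    have h1 : c - κ ≤ m := hmdef ▸ hmin j
    rw [hgdef]; linarith
  have hm0 : 0 < m := by
    have h1 : c - κ ≤ m := hmdef ▸ hmin j
    linarith
  have hmδ : δ ≤ m := by
    have h1 : c - κ ≤ m := hmdef ▸ hmin j
    linarith
  have hfd : ∀ i, fdel δ (u i) = u i := fun i => fdel_eq (le_trans hmδ (hjm i))
  have hupos : ∀ i, 0 < u i := fun i => lt_of_lt_of_le hm0 (hjm i)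
  -- upper bound on coordinates
  have hub : ∀ i, u i ≤ c + (D - 1) * g := by
    intro i
    have h1 : ((Finset.univ.erase i).card : ℝ) * m ≤ ∑ k ∈ Finset.univ.erase i, u k := by
      have := Finset.card_nsmul_le_sum (Finset.univ.erase i) u m (fun k _ => hjm k)
      rwa [nsmul_eq_mul] at this
    have hcard : (Finset.univ.erase i).card = d - 1 := by
      rw [Finset.card_erase_of_mem (Finset.mem_univ i), Finset.card_univ, Fintype.card_fin]
    have hsplit : u i + ∑ k ∈ Finset.univ.erase i, u k = 1 := by
      rw [Finset.add_sum_erase _ _ (Finset.mem_univ i)]; exact hu1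
    rw [hcard, Nat.cast_sub (by omega), Nat.cast_one, ← hDdef] at h1
    have hDg : c + (D - 1) * g = 1 - (D - 1) * m := by rw [hgdef]; nlinarith
    rw [hDg]; linarith
  set X2 := ∑ i, (u i - c) ^ 2 with hX2def
  clear_value X2
  have hX2nn : 0 ≤ X2 := hX2def ▸ Finset.sum_nonneg fun i _ => sq_nonneg _
  have hX2ub : X2 ≤ D * ((D - 1) * g) ^ 2 := by
    have hbd : ∀ i ∈ Finset.univ, (u i - c) ^ 2 ≤ ((D - 1) * g) ^ 2 := by
      intro i _
      have h1 : -((D - 1) * g) ≤ u i - c := by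
        have h2 := hjm i
        have h3 : g ≤ (D-1) * g := by nlinarith
        rw [hgdef] at h3 ⊢
        linarith
      have h2 : u i - c ≤ (D - 1) * g := by linarith [hub i]
      nlinarith
    have h := Finset.sum_le_card_nsmul _ _ _ hbd
    rw [Finset.card_univ, Fintype.card_fin, nsmul_eq_mul, ← hDdef] at h
    exact hX2def ▸ h
  have hX2g : X2 ≤ g / 2 := by
    have h1 : D * (D-1)^2 * g ≤ D * (D-1)^2 * κ := by nlinarith
    have h2 : D * (D-1)^2 * κ = 1/2 := by rw [hκdef, mul_one_div]; exact (div_eq_iff hden.ne').mpr (by ring)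
    have e1 : D * ((D - 1) * g) ^ 2 = (D * (D-1)^2 * g) * g := by ring
    have e2 : (D * (D-1)^2 * g) * g ≤ (D * (D-1)^2 * κ) * g := mul_le_mul_of_nonneg_right h1 hg0
    rw [h2] at e2
    nlinarith
  have hzero : ∑ i, (u i - c) = 0 := by
    rw [Finset.sum_sub_distrib, hu1, Finset.sum_const, Finset.card_univ, Fintype.card_fin,
      nsmul_eq_mul, ← hDdef]
    linarith
  -- positivity of g
  have hgpos : 0 < g := by
    rcases lt_or_eq_of_le hg0 with h | h
    · exact h
    · exfalso
      obtain ⟨i0, hi0⟩ := hne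
      have hmc' : m = c := by rw [hgdef] at h; linarith
      have hge : ∀ i ∈ Finset.univ, 0 ≤ u i - c := fun i _ => by linarith [hjm i, hmc'.symm.le]
      have := (Finset.sum_eq_zero_iff_of_nonneg hge).mp hzero i0 (mem_univ i0)
      exact hi0 (by linarith)
  have hX2pos : 0 < X2 := by
    have h1 : (u j - c) ^ 2 ≤ ∑ i, (u i - c) ^ 2 :=
      Finset.single_le_sum (f := fun i => (u i - c) ^ 2) (fun i _ => sq_nonneg _) (mem_univ j)
    nlinarith [hX2def, hgdef, hmdef]
  have hmα : 0 < m ^ (-α) := Real.rpow_pos_of_pos hm0 _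
  by_cases hloc : α * (D * g) ≤ β
  · -- LOCAL (near-uniform curvature) case
    set C := c + (D - 1) * g with hCdef
    clear_value C
    have hCc : c ≤ C := by
      rw [hCdef]
      nlinarith only [mul_nonneg (by linarith : (0:ℝ) ≤ D - 1) hg0]
    have hC0 : 0 < C := lt_of_lt_of_le hc0 hCc
    have hkey : ∀ i ∈ Finset.univ, u i ^ (-α) * (u i - c)
        ≤ c ^ (-α) * (u i - c) - α * C ^ (-(α + 1)) * (u i - c) ^ 2 := by
      intro i _
      exact tangent hα1 hc0 (hupos i) (hub i) hCc
    have hsum1 : ∑ i, u i ^ (-α) * (u i - c) ≤ -(α * C ^ (-(α + 1)) * X2) := by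
      have h1 := Finset.sum_le_sum hkey
      have h2 : ∑ i, (c ^ (-α) * (u i - c) - α * C ^ (-(α + 1)) * (u i - c) ^ 2)
          = c ^ (-α) * (∑ i, (u i - c)) - α * C ^ (-(α + 1)) * (∑ i, (u i - c) ^ 2) := by
        rw [Finset.sum_sub_distrib, ← Finset.mul_sum, ← Finset.mul_sum]
      rw [h2, hzero, ← hX2def, mul_zero] at h1
      linarith
    have hW : ∑ k, u k ^ (-α) ≤ D * m ^ (-α) := by
      have hbd : ∀ k ∈ Finset.univ, u k ^ (-α) ≤ m ^ (-α) := fun k _ =>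
        Real.rpow_le_rpow_of_nonpos hm0 (hjm k) (by linarith)
      have h := Finset.sum_le_card_nsmul _ _ _ hbd
      rw [Finset.card_univ, Fintype.card_fin, nsmul_eq_mul, ← hDdef] at h
      exact h
    have hWpos : 0 < ∑ k, u k ^ (-α) :=
      Finset.sum_pos (fun k _ => Real.rpow_pos_of_pos (hupos k) _) univ_nonempty
    -- analytic key estimate
    set t := D * g with htdef
    clear_value t
    have ht0 : 0 < t := by rw [htdef]; positivity
    have htβ : α * t ≤ β := hloc
    have ht13 : t ≤ 1 / 3 := by
      nlinarith only [htβ, hβ40, ht0, mul_le_mul_of_nonneg_right hα3β ht0.le]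
    have hct : c * t = g := by rw [htdef, ← mul_assoc, mul_comm c D, hDc, one_mul]
    have hmct : m = c * (1 - t) := by
      have h1 : c * (1 - t) = c - c * t := by ring
      rw [h1, hct, hgdef]; ring
    have hCct : C = c * (1 + (D - 1) * t) := by
      have h1 : c * ((D - 1) * t) = (D - 1) * g := by rw [← hct]; ring
      rw [hCdef, mul_add, mul_one, h1]
    have h1t0 : 0 < 1 - t := by linarith
    have hA0 : 0 < 1 + (D - 1) * t := by
      nlinarith only [mul_nonneg (by linarith : (0:ℝ) ≤ D - 1) ht0.le]
    have hmr : m ^ (-α) = c ^ (-α) * (1 - t) ^ (-α) := by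
      rw [hmct, Real.mul_rpow hc0.le h1t0.le]
    have hCr : C ^ (-(α + 1)) = c ^ (-(α + 1)) * (1 + (D - 1) * t) ^ (-(α + 1)) := by
      rw [hCct, Real.mul_rpow hc0.le hA0.le]
    have hcsplit : c ^ (-(α + 1)) = c ^ (-α) * c⁻¹ := by
      rw [show -(α + 1) = -α + -1 by ring, Real.rpow_add hc0, Real.rpow_neg_one]
    have hcinv : c⁻¹ = D := by rw [hcdef, one_div, inv_inv]
    -- exp bounds
    have hAexp : (1 + (D - 1) * t) ^ (α + 1) ≤ Real.exp ((D - 1) * t * (α + 1)) := by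
      have h1 : 1 + (D - 1) * t ≤ Real.exp ((D - 1) * t) := by
        have := Real.add_one_le_exp ((D - 1) * t); linarith
      have h2 : (1 + (D - 1) * t) ^ (α + 1) ≤ Real.exp ((D - 1) * t) ^ (α + 1) :=
        Real.rpow_le_rpow hA0.le h1 (by linarith)
      rwa [← Real.exp_mul] at h2
    have h1texp : (1 - t) ^ (-α) ≤ Real.exp (2 * t * α) := by
      have hE : 0 < Real.exp (2 * t) := Real.exp_pos _
      have h2 : 1 + 2 * t ≤ Real.exp (2 * t) := by
        have := Real.add_one_le_exp (2 * t); linarith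
      have h1 : Real.exp (-(2 * t)) ≤ 1 - t := by
        rw [Real.exp_neg, inv_eq_one_div, div_le_iff₀ hE]
        nlinarith only [mul_le_mul_of_nonneg_left h2 (by linarith : (0:ℝ) ≤ 1 - t), ht0.le, ht13]
      have h4 : (1 - t) ^ (-α) ≤ Real.exp (-(2 * t)) ^ (-α) :=
        Real.rpow_le_rpow_of_nonpos (Real.exp_pos _) h1 (by linarith)
      have h5 : -(2 * t) * (-α) = 2 * t * α := by ring
      rwa [← Real.exp_mul, h5] at h4
    have hprod : (1 - t) ^ (-α) * (1 + (D - 1) * t) ^ (α + 1) < α := by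
      have h5 : (1 - t) ^ (-α) * (1 + (D - 1) * t) ^ (α + 1)
          ≤ Real.exp (2 * t * α) * Real.exp ((D - 1) * t * (α + 1)) :=
        mul_le_mul h1texp hAexp (Real.rpow_pos_of_pos hA0 _).le (Real.exp_pos _).le
      rw [← Real.exp_add] at h5
      have hta1 : t * (α + 1) ≤ β + 1 / 3 := by linarith only [htβ, ht13]
      have h6a : (D - 1) * (t * (α + 1)) ≤ (D - 1) * (β + 1 / 3) :=
        mul_le_mul_of_nonneg_left hta1 (by linarith)
      have h6 : 2 * t * α + (D - 1) * t * (α + 1) ≤ 2 * D * β := by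
        nlinarith only [h6a, htβ, hβ40, hD,
          mul_nonneg (by linarith : (0:ℝ) ≤ D - 1) (by linarith : (0:ℝ) ≤ β - 1/3)]
      have h7 : Real.exp (2 * t * α + (D - 1) * t * (α + 1)) ≤ Real.exp (2 * D * β) :=
        Real.exp_le_exp.mpr h6
      linarith
    have hApow : 0 < (1 + (D - 1) * t) ^ (α + 1) := Real.rpow_pos_of_pos hA0 _
    have hred : (1 - t) ^ (-α) < α * (1 + (D - 1) * t) ^ (-(α + 1)) := by
      rw [Real.rpow_neg hA0.le, ← div_eq_mul_inv, lt_div_iff₀ hApow]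
      exact hprod
    have hcα : 0 < c ^ (-α) := Real.rpow_pos_of_pos hc0 _
    have hkey2 : D * m ^ (-α) < α * C ^ (-(α + 1)) := by
      calc D * m ^ (-α) = c ^ (-α) * (D * (1 - t) ^ (-α)) := by rw [hmr]; ring
        _ < c ^ (-α) * (D * (α * (1 + (D - 1) * t) ^ (-(α + 1)))) := by
            apply mul_lt_mul_of_pos_left _ hcα
            exact mul_lt_mul_of_pos_left hred hD0
        _ = α * C ^ (-(α + 1)) := by rw [hCr, hcsplit, hcinv]; ring
    -- conclude
    have hGq : Gq d δ α u = (∑ i, u i * u i ^ (-α)) / (∑ k, u k ^ (-α)) := by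
      unfold Gq
      rw [Finset.sum_congr rfl fun i (_ : i ∈ Finset.univ) => by rw [hfd i]]
      rw [show (∑ k, fdel δ (u k) ^ (-α)) = ∑ k, u k ^ (-α) from
        Finset.sum_congr rfl fun k _ => by rw [hfd k]]
    rw [hGq, div_lt_iff₀ hWpos]
    have hid : ∑ i, u i * u i ^ (-α)
        = (∑ i, u i ^ (-α) * (u i - c)) + c * ∑ k, u k ^ (-α) := by
      rw [Finset.mul_sum, ← Finset.sum_add_distrib]
      exact Finset.sum_congr rfl fun i _ => by ring
    have hWQ : ∑ k, u k ^ (-α) < α * C ^ (-(α + 1)) := lt_of_le_of_lt hW hkey2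
    have hfin := mul_lt_mul_of_pos_right hWQ hX2pos
    linarith only [hid, hsum1, hfin]
  · -- FAR case
    push_neg at hloc
    set T := c - X2 with hTdef
    clear_value T
    have hTm : m + g / 2 ≤ T := by
      rw [hTdef]
      have : g = c - m := hgdef
      linarith [hX2g]
    have hT0 : 0 < T := by linarith [hm0, hgpos]
    have hTα : 0 < T ^ (-α) := Real.rpow_pos_of_pos hT0 _
    apply G_lt hδ
    rw [← Finset.add_sum_erase _ _ (Finset.mem_univ j)]
    have hjterm : fdel δ (u j) ^ (-α) * (u j - T) ≤ m ^ (-α) * (-(g / 2)) := by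
      rw [hfd j, ← hmdef]
      exact mul_le_mul_of_nonneg_left (by linarith) hmα.le
    have hother : ∀ k ∈ Finset.univ.erase j,
        fdel δ (u k) ^ (-α) * (u k - T) ≤ T ^ (-α) * (D * g) := by
      intro k _
      rcases le_or_gt (u k) T with h | h
      · have h1 := wt_pos (x := u k) (α := α) hδ
        have h2 : 0 < T ^ (-α) * (D * g) := by positivity
        nlinarith
      · rw [hfd k]
        have h1 : u k ^ (-α) ≤ T ^ (-α) :=
          Real.rpow_le_rpow_of_nonpos hT0 h.le (by linarith)
        have h2 : u k - T ≤ D * g := by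
          rw [hTdef]
          have := hub k
          linarith [hX2g, hg0]
        have h3 : 0 ≤ u k - T := by linarith
        calc u k ^ (-α) * (u k - T) ≤ T ^ (-α) * (u k - T) :=
              mul_le_mul_of_nonneg_right h1 h3
          _ ≤ T ^ (-α) * (D * g) := mul_le_mul_of_nonneg_left h2 hTα.le
    have hcard : (Finset.univ.erase j).card = d - 1 := by
      rw [Finset.card_erase_of_mem (Finset.mem_univ j), Finset.card_univ, Fintype.card_fin]
    have hsum : ∑ k ∈ Finset.univ.erase j, fdel δ (u k) ^ (-α) * (u k - T)
        ≤ (D - 1) * (T ^ (-α) * (D * g)) := by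
      have h := Finset.sum_le_card_nsmul _ _ _ hother
      rw [hcard, nsmul_eq_mul, Nat.cast_sub (by omega : 1 ≤ d), Nat.cast_one, ← hDdef] at h
      exact h
    -- Bernoulli: (T/m)^α is large
    have hmD : m * D ≤ 1 := by
      nlinarith only [mul_le_mul_of_nonneg_right hmc hD0.le, hDc]
    have hs2 : D * g / 2 ≤ T / m - 1 := by
      rw [le_sub_iff_add_le, le_div_iff₀ hm0]
      nlinarith only [hTm, hm0, mul_nonneg (by linarith : (0:ℝ) ≤ 1 - m * D) hg0]
    have hs0 : 0 ≤ T / m - 1 := by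
      nlinarith only [hs2, mul_pos hD0 hgpos]
    have hbern := bern hα1 hs0
    rw [show 1 + (T / m - 1) = T / m by ring] at hbern
    have hTm2 : 2 * D ^ 2 < (T / m) ^ α := by
      have h1 : α * (D * g / 2) ≤ α * (T / m - 1) := mul_le_mul_of_nonneg_left hs2 (by linarith)
      have h2 : β < α * (D * g) := hloc
      rw [hβdef] at h2
      linarith only [hbern, h1, h2]
    have hconv : (T / m) ^ α * T ^ (-α) = m ^ (-α) := by
      rw [Real.rpow_neg hT0.le, ← Real.inv_rpow hT0.le, ← Real.mul_rpow (by positivity) (by positivity)]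
      rw [show T / m * T⁻¹ = m⁻¹ by field_simp]
      rw [Real.inv_rpow hm0.le, ← Real.rpow_neg hm0.le]
    have h2d : 2 * D ^ 2 * T ^ (-α) < m ^ (-α) := by
      have := mul_lt_mul_of_pos_right hTm2 hTα
      rwa [hconv] at this
    have hfin : m ^ (-α) * (-(g / 2)) + (D - 1) * (T ^ (-α) * (D * g)) < 0 := by
      nlinarith only [mul_lt_mul_of_pos_right h2d (by linarith : (0:ℝ) < g / 2),
        mul_pos (mul_pos hD0 hgpos) hTα]
    linarith only [hjterm, hsum, hfin]

lemma G_const {d : ℕ} [NeZero d] {δ α : ℝ} (hδ : 0 < δ) (hδc : δ ≤ 1 / (d : ℝ))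
    (u : Fin d → ℝ) (hu : ∀ i, u i = 1 / (d : ℝ)) : Gq d δ α u = 1 / (d : ℝ) := by
  have hd0 : (0 : ℝ) < (d : ℝ) := by
    have : 0 < d := Nat.pos_of_ne_zero (NeZero.ne d)
    exact_mod_cast this
  have hc0 : (0 : ℝ) < 1 / (d : ℝ) := by positivity
  have hw : ∀ i, fdel δ (u i) ^ (-α) = (1 / (d : ℝ)) ^ (-α) := fun i => by
    rw [hu i, fdel_eq hδc]
  have hwpos : 0 < (1 / (d : ℝ)) ^ (-α) := Real.rpow_pos_of_pos hc0 _
  unfold Gq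
  rw [Finset.sum_congr rfl fun i (_ : i ∈ Finset.univ) => by rw [hw i, hu i]]
  rw [show (∑ k, fdel δ (u k) ^ (-α)) = ∑ _k : Fin d, (1 / (d:ℝ)) ^ (-α) from
    Finset.sum_congr rfl fun k _ => by rw [hw k]]
  rw [Finset.sum_const, Finset.sum_const, Finset.card_univ, Fintype.card_fin,
    nsmul_eq_mul, nsmul_eq_mul]
  rw [mul_div_mul_left _ _ (ne_of_gt hd0)]
  rw [mul_div_assoc, div_self (ne_of_gt hwpos), mul_one]

lemma claimII_le {d : ℕ} (hd3 : 3 ≤ d) {δ α : ℝ} (hδ : 0 < δ)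
    (hδd : δ ≤ 1 / (2 * (d : ℝ)))
    (hαexp : Real.exp (2 * (d : ℝ) * (4 * (d : ℝ) ^ 2 + 4)) < α)
    (u : Fin d → ℝ) (hu0 : ∀ i, 0 ≤ u i) (hu1 : ∑ i, u i = 1)
    (hmin : ∀ i, 1 / (d : ℝ) - 1 / (2 * (d : ℝ) * ((d : ℝ) - 1) ^ 2) ≤ u i) :
    Gq d δ α u ≤ 1 / (d : ℝ) - ∑ i, (u i - 1 / (d : ℝ)) ^ 2 := by
  haveI : NeZero d := ⟨by omega⟩
  by_cases hne : ∃ i, u i ≠ 1 / (d : ℝ)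
  · exact (claimII hd3 hδ hδd hαexp u hu0 hu1 hmin hne).le
  · push_neg at hne
    have hd0 : (0 : ℝ) < (d : ℝ) := by
      have h3 : (3:ℝ) ≤ (d:ℝ) := by exact_mod_cast hd3
      linarith
    have hδc : δ ≤ 1 / (d : ℝ) := by
      have : 1 / (2 * (d:ℝ)) ≤ 1 / (d:ℝ) := by
        rw [div_le_div_iff₀ (by linarith) hd0]; nlinarith
      linarith
    have hX0 : ∑ i, (u i - 1 / (d:ℝ)) ^ 2 = 0 :=
      Finset.sum_eq_zero fun i _ => by rw [hne i]; ring
    rw [G_const hδ hδc u hne, hX0]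
    linarith

lemma dHdt_swap (d : ℕ) (δ α : ℝ) (u v : Fin d → ℝ) : dHdt d δ α u v = dHdt d δ α v u := by
  rw [dHdt_eq, dHdt_eq, Finset.sum_congr rfl fun i (_ : i ∈ Finset.univ) => mul_comm (u i) (v i)]
  ring

lemma sum_shift2 {d : ℕ} (u v : Fin d → ℝ) (a b : ℝ) (hu1 : ∑ i, u i = 1)
    (hv1 : ∑ i, v i = 1) :
    ∑ i, (u i - a) * (v i - b) = (∑ i, u i * v i) - b - a + (d : ℝ) * (a * b) := by
  rw [Finset.sum_congr rfl fun i (_ : i ∈ Finset.univ) =>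
    (by ring : (u i - a) * (v i - b) = u i * v i - b * u i - a * v i + a * b)]
  rw [Finset.sum_add_distrib, Finset.sum_sub_distrib, Finset.sum_sub_distrib,
    ← Finset.mul_sum, ← Finset.mul_sum, hu1, hv1, Finset.sum_const, Finset.card_univ,
    Fintype.card_fin, nsmul_eq_mul]
  ring

lemma sum_sq_expand {d : ℕ} (x y : Fin d → ℝ) :
    ∑ i, (x i + y i) ^ 2
      = (∑ i, x i ^ 2) + 2 * (∑ i, x i * y i) + (∑ i, y i ^ 2) := by
  rw [Finset.sum_congr rfl fun i (_ : i ∈ Finset.univ) =>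
    (by ring : (x i + y i) ^ 2 = x i ^ 2 + 2 * (x i * y i) + y i ^ 2)]
  rw [Finset.sum_add_distrib, Finset.sum_add_distrib, ← Finset.mul_sum]

lemma coord_ub {d : ℕ} [NeZero d] (u : Fin d → ℝ) (hu1 : ∑ i, u i = 1) {j : Fin d}
    (hj : ∀ i, u j ≤ u i) (i : Fin d) : u i ≤ 1 - ((d : ℝ) - 1) * u j := by
  have h1 : ((Finset.univ.erase i).card : ℝ) * u j ≤ ∑ k ∈ Finset.univ.erase i, u k := by
    have := Finset.card_nsmul_le_sum (Finset.univ.erase i) u (u j) (fun k _ => hj k)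
    rwa [nsmul_eq_mul] at this
  have hcard : (Finset.univ.erase i).card = d - 1 := by
    rw [Finset.card_erase_of_mem (Finset.mem_univ i), Finset.card_univ, Fintype.card_fin]
  have hd1 : 1 ≤ d := Nat.pos_of_ne_zero (NeZero.ne d)
  have hsplit : u i + ∑ k ∈ Finset.univ.erase i, u k = 1 := by
    rw [Finset.add_sum_erase _ _ (Finset.mem_univ i)]; exact hu1
  rw [hcard, Nat.cast_sub hd1, Nat.cast_one] at h1
  linarith

lemma min_le_S {d : ℕ} (u v : Fin d → ℝ) (hv0 : ∀ i, 0 ≤ v i) (hv1 : ∑ i, v i = 1)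
    {j : Fin d} (hj : ∀ i, u j ≤ u i) : u j ≤ ∑ i, u i * v i := by
  have h1 : ∑ i, u j * v i ≤ ∑ i, u i * v i :=
    Finset.sum_le_sum fun i _ => mul_le_mul_of_nonneg_right (hj i) (hv0 i)
  rwa [← Finset.mul_sum, hv1, mul_one] at h1

lemma main_half {d : ℕ} (hd3 : 3 ≤ d) {δ α ρ : ℝ} (hδ : 0 < δ)
    (hδρ : δ ≤ ρ) (hρ2d : ρ ≤ 1 / (2 * (d : ℝ)))
    (hαexp : Real.exp (2 * (d : ℝ) * (4 * (d : ℝ) ^ 2 + 4)) < α)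
    (hα1 : 1 ≤ α)
    (hcond : (d : ℝ) * (1 + 1 / (32 * (d : ℝ) * ((d : ℝ) - 1) ^ 2)) ^ ((1 : ℝ) - α)
        < 1 / (32 * (d : ℝ) * ((d : ℝ) - 1) ^ 2))
    (u v : Fin d → ℝ) (hu0 : ∀ i, 0 ≤ u i) (hu1 : ∑ i, u i = 1)
    (hv0 : ∀ i, 0 ≤ v i) (hv1 : ∑ i, v i = 1)
    (hS : 3 / 2 * ρ ≤ ∑ i, u i * v i)
    {ju jv : Fin d} (hju : ∀ i, u ju ≤ u i) (hjv : ∀ i, v jv ≤ v i)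
    (hcase :
      (1 / (d : ℝ) - u ju ≤ 1 / (2 * (d : ℝ) * ((d : ℝ) - 1) ^ 2)
        ∧ 1 / (d : ℝ) - v jv ≤ 1 / (2 * (d : ℝ) * ((d : ℝ) - 1) ^ 2)
        ∧ u ≠ fun _ => 1 / (d : ℝ))
      ∨ (1 / (d : ℝ) - u ju ≤ 1 / (16 * (d : ℝ) ^ 2 * ((d : ℝ) - 1) ^ 2)
        ∧ 1 / (2 * (d : ℝ) * ((d : ℝ) - 1) ^ 2) < 1 / (d : ℝ) - v jv)
      ∨ (1 / (16 * (d : ℝ) ^ 2 * ((d : ℝ) - 1) ^ 2) < 1 / (d : ℝ) - u ju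
        ∧ 1 / (16 * (d : ℝ) ^ 2 * ((d : ℝ) - 1) ^ 2) < 1 / (d : ℝ) - v jv)) :
    dHdt d δ α u v < 0 := by
  haveI : NeZero d := ⟨by omega⟩
  have hD : (3 : ℝ) ≤ (d : ℝ) := by exact_mod_cast hd3
  have hD0 : (0 : ℝ) < (d : ℝ) := by linarith
  have hD1 : (0 : ℝ) < (d : ℝ) - 1 := by linarith
  -- abbreviations
  set c := 1 / (d : ℝ) with hc
  set K4 := 1 / (2 * (d : ℝ) * ((d : ℝ) - 1) ^ 2) with hK4
  set K5 := 1 / (16 * (d : ℝ) ^ 2 * ((d : ℝ) - 1) ^ 2) with hK5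
  set γ := 1 / (32 * (d : ℝ) * ((d : ℝ) - 1) ^ 2) with hγ
  set S := ∑ i, u i * v i with hSdef
  set mu := u ju with hmu
  set mv := v jv with hmv
  have hc0 : 0 < c := by rw [hc]; positivity
  have hDc : (d : ℝ) * c = 1 := by rw [hc]; field_simp
  have hc3 : c ≤ 1 / 3 := by rw [hc, div_le_div_iff₀ hD0 (by norm_num)]; linarith
  have hK40 : 0 < K4 := by rw [hK4]; positivity
  have hK50 : 0 < K5 := by rw [hK5]; positivity
  have hγ0 : 0 < γ := by rw [hγ]; positivity
  have h45 : K4 = 8 * (d : ℝ) * K5 := by rw [hK4, hK5]; field_simp; ring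
  have hγ4 : K4 = 16 * γ := by rw [hK4, hγ]; field_simp; ring
  have hK4c : K4 ≤ c / 4 := by
    rw [hK4, hc, div_le_div_iff₀ (by positivity) (by positivity)]
    nlinarith
  clear_value c K4 K5 γ S mu mv
  have hju' : ∀ i, u ju ≤ u i := fun i => hmu ▸ hju i
  have hjv' : ∀ i, v jv ≤ v i := fun i => hmv ▸ hjv i
  have hρc2 : ρ ≤ c / 2 := by
    have h1 : 1 / (2 * (d : ℝ)) = c / 2 := by rw [hc]; ring
    linarith [h1 ▸ hρ2d]
  have hδ2d : δ ≤ 1 / (2 * (d : ℝ)) := by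
    have h1 : 1 / (2 * (d : ℝ)) = c / 2 := by rw [hc]; ring
    rw [h1]; linarith
  have hρ0 : 0 < ρ := lt_of_lt_of_le hδ hδρ
  have hS0 : 0 < S := by rw [hSdef] at hS ⊢; linarith
  have hρ23S : ρ ≤ 2 / 3 * S := by linarith
  have hmuS : mu ≤ S := by rw [hmu, hSdef]; exact min_le_S u v hv0 hv1 hju'
  have hmvS : mv ≤ S := by
    rw [hmv, hSdef, Finset.sum_congr rfl fun i (_ : i ∈ Finset.univ) => mul_comm (u i) (v i)]
    exact min_le_S v u hu0 hu1 hjv'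
  have hmu0 : 0 ≤ mu := by rw [hmu]; exact hu0 ju
  have hmv0 : 0 ≤ mv := by rw [hmv]; exact hv0 jv
  have hK54 : K5 ≤ K4 := by nlinarith only [h45, hK50, hD]
  have hDK5 : ((d : ℝ) - 1) * K5 ≤ K4 / 8 := by nlinarith only [h45, hK50, hD]
  have hγ5 : γ ≤ 1 / 5 := by linarith only [hγ4, hK4c, hc3]
  have hγDK5 : γ ≤ (d : ℝ) * K5 := by nlinarith only [h45, hγ4, hK40]
  -- dHdt expression
  rw [dHdt_eq, ← hSdef]
  rcases hcase with ⟨h1, h2, h3⟩ | ⟨h1, h2⟩ | ⟨h1, h2⟩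
  · -- CASE A : both nearly uniform, u ≠ unif
    have hminu : ∀ i, c - K4 ≤ u i := fun i => by linarith [hju i]
    have hminv : ∀ i, c - K4 ≤ v i := fun i => by linarith [hjv i]
    have hne : ∃ i, u i ≠ c := Function.ne_iff.mp h3
    have hGu : Gq d δ α u < c - ∑ i, (u i - c) ^ 2 := by
      have h := claimII hd3 hδ hδ2d hαexp u hu0 hu1
        (by simp only [← hc, ← hK4]; exact hminu) (by simp only [← hc]; exact hne)
      simp only [← hc, ← hK4] at h
      exact h
    have hGv : Gq d δ α v ≤ c - ∑ i, (v i - c) ^ 2 := by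
      have h := claimII_le hd3 hδ hδ2d hαexp v hv0 hv1
        (by simp only [← hc, ← hK4]; exact hminv)
      simp only [← hc] at h
      exact h
    have idS : ∑ i, (u i - c) * (v i - c) = S - c := by
      have h := sum_shift2 u v c c hu1 hv1
      rw [← hSdef] at h
      have hcc : (d : ℝ) * (c * c) = c := by
        have : (d : ℝ) * (c * c) = ((d : ℝ) * c) * c := by ring
        rw [this, hDc, one_mul]
      linarith [h, hcc]
    have hsq : 0 ≤ ∑ i, ((u i - c) + (v i - c)) ^ 2 :=
      Finset.sum_nonneg fun i _ => sq_nonneg _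
    have hexp := sum_sq_expand (fun i => u i - c) (fun i => v i - c)
    linarith only [hGu, hGv, idS, hsq, hexp]
  · -- CASE B : u very central, v far
    have hminu : ∀ i, c - K4 ≤ u i := fun i => by linarith [hju i, hK54]
    have hGu : Gq d δ α u ≤ c - ∑ i, (u i - c) ^ 2 := by
      have h := claimII_le hd3 hδ hδ2d hαexp u hu0 hu1
        (by simp only [← hc, ← hK4]; exact hminu)
      simp only [← hc] at h
      exact h
    have hGuc : Gq d δ α u ≤ c :=
      le_trans hGu (by linarith [Finset.sum_nonneg (fun i (_ : i ∈ Finset.univ) => sq_nonneg (u i - c))])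
    have hGv : Gq d δ α v < (1 + γ) * max mv ρ := by
      have h := claimI hδ hδρ hρ0 hγ0 hα1 hcond v hjv'
      rw [← hmv] at h
      exact h
    -- coordinate bounds for u
    have hxb : ∀ i, -( ((d:ℝ) - 1) * K5) ≤ u i - c ∧ u i - c ≤ ((d:ℝ) - 1) * K5 := by
      intro i
      constructor
      · nlinarith only [hju i, h1, hK50, hD, hD1]
      · have hup := coord_ub u hu1 hju' i
        rw [← hmu] at hup
        have e1 : 1 - ((d:ℝ) - 1) * mu - c = ((d:ℝ) - 1) * (c - mu) := by
          linear_combination -hDc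
        nlinarith only [hup, e1, h1, hD1, hK50]
    -- S bounds via cross terms
    have hcross : ∀ i ∈ Finset.univ,
        -(((d:ℝ) - 1) * K5 * (v i + c)) ≤ (u i - c) * (v i - c)
        ∧ (u i - c) * (v i - c) ≤ ((d:ℝ) - 1) * K5 * (v i + c) := by
      intro i _
      obtain ⟨hl, hr⟩ := hxb i
      have hv' := hv0 i
      constructor <;> nlinarith only [hl, hr, hv', hc0]
    have hsumv : ∑ i, (v i + c) = 2 := by
      rw [Finset.sum_add_distrib, hv1, Finset.sum_const, Finset.card_univ, Fintype.card_fin,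
        nsmul_eq_mul, hDc]
      norm_num
    have idS : ∑ i, (u i - c) * (v i - c) = S - c := by
      have h := sum_shift2 u v c c hu1 hv1
      rw [← hSdef] at h
      have hcc : (d : ℝ) * (c * c) = c := by
        have : (d : ℝ) * (c * c) = ((d : ℝ) * c) * c := by ring
        rw [this, hDc, one_mul]
      linarith [h, hcc]
    have hSl : c - 2 * (((d:ℝ) - 1) * K5) ≤ S := by
      have hlow := Finset.sum_le_sum (fun i hi => (hcross i hi).1)
      rw [idS] at hlow
      have : ∑ i, -(((d:ℝ) - 1) * K5 * (v i + c)) = -(((d:ℝ) - 1) * K5 * 2) := by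
        rw [Finset.sum_neg_distrib, ← Finset.mul_sum, hsumv]
      rw [this] at hlow
      linarith
    have hSu : S ≤ c + 2 * (((d:ℝ) - 1) * K5) := by
      have hhigh := Finset.sum_le_sum (fun i hi => (hcross i hi).2)
      rw [idS] at hhigh
      have : ∑ i, ((d:ℝ) - 1) * K5 * (v i + c) = ((d:ℝ) - 1) * K5 * 2 := by
        rw [← Finset.mul_sum, hsumv]
      rw [this] at hhigh
      linarith
    have hmaxv : max mv ρ ≤ c - K4 := by
      apply max_le
      · linarith only [h2]
      · linarith only [hρ23S, hSu, hDK5, hK4c, hc0, hK40]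
    have hγc : γ * c ≤ K4 / 48 := by
      nlinarith only [hγ4, hc3, hc0, hK40, mul_nonneg hγ0.le (by linarith : (0:ℝ) ≤ 1/3 - c)]
    have hGv2 : Gq d δ α v < (1 + γ) * (c - K4) :=
      lt_of_lt_of_le hGv (mul_le_mul_of_nonneg_left hmaxv (by linarith))
    have hγK4 : 0 ≤ γ * K4 := mul_nonneg hγ0.le hK40.le
    linarith only [hGuc, hGv2, hSl, hγc, hDK5, hγK4, hK40]
  · -- CASE D : both not very central
    have hGu : Gq d δ α u < (1 + γ) * max mu ρ := by
      have h := claimI hδ hδρ hρ0 hγ0 hα1 hcond u hju'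
      rw [← hmu] at h
      exact h
    have hGv : Gq d δ α v < (1 + γ) * max mv ρ := by
      have h := claimI hδ hδρ hρ0 hγ0 hα1 hcond v hjv'
      rw [← hmv] at h
      exact h
    have hmuc5 : mu ≤ c - K5 := by linarith only [h1]
    have hmvc5 : mv ≤ c - K5 := by linarith only [h2]
    have hγS : γ * S ≤ S / 5 := by nlinarith only [hγ5, hS0]
    rcases le_or_gt mu (2 / 3 * S) with hu23 | hu23 <;>
      rcases le_or_gt mv (2 / 3 * S) with hv23 | hv23
    · -- both small
      have hAu : max mu ρ ≤ 2 / 3 * S := max_le hu23 hρ23S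
      have hAv : max mv ρ ≤ 2 / 3 * S := max_le hv23 hρ23S
      have hGu2 : Gq d δ α u < (1 + γ) * (2 / 3 * S) :=
        lt_of_lt_of_le hGu (mul_le_mul_of_nonneg_left hAu (by linarith))
      have hGv2 : Gq d δ α v < (1 + γ) * (2 / 3 * S) :=
        lt_of_lt_of_le hGv (mul_le_mul_of_nonneg_left hAv (by linarith))
      nlinarith only [hGu2, hGv2, hγS, hS0]
    · -- mu small, mv big
      have hAu : max mu ρ ≤ 2 / 3 * S := max_le hu23 hρ23S
      have hAv : max mv ρ ≤ S := max_le hmvS (by linarith)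
      have hGu2 : Gq d δ α u < (1 + γ) * (2 / 3 * S) :=
        lt_of_lt_of_le hGu (mul_le_mul_of_nonneg_left hAu (by linarith))
      have hGv2 : Gq d δ α v < (1 + γ) * S :=
        lt_of_lt_of_le hGv (mul_le_mul_of_nonneg_left hAv (by linarith))
      nlinarith only [hGu2, hGv2, hγS, hS0]
    · -- mu big, mv small
      have hAu : max mu ρ ≤ S := max_le hmuS (by linarith)
      have hAv : max mv ρ ≤ 2 / 3 * S := max_le hv23 hρ23S
      have hGu2 : Gq d δ α u < (1 + γ) * S :=
        lt_of_lt_of_le hGu (mul_le_mul_of_nonneg_left hAu (by linarith))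
      have hGv2 : Gq d δ α v < (1 + γ) * (2 / 3 * S) :=
        lt_of_lt_of_le hGv (mul_le_mul_of_nonneg_left hAv (by linarith))
      nlinarith only [hGu2, hGv2, hγS, hS0]
    · -- both big
      have hAu : max mu ρ = mu := max_eq_left (by linarith)
      have hAv : max mv ρ = mv := max_eq_left (by linarith)
      rw [hAu] at hGu; rw [hAv] at hGv
      -- lower bound on S
      have hSlow : mu + mv - (d:ℝ) * (mu * mv) ≤ S := by
        have hnn : 0 ≤ ∑ i, (u i - mu) * (v i - mv) :=
          Finset.sum_nonneg fun i _ => mul_nonneg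
            (by linarith [hju i]) (by linarith [hjv i])
        have h := sum_shift2 u v mu mv hu1 hv1
        rw [← hSdef] at h
        linarith [h, hnn]
      have hmm1 : mu * mv ≤ (c - K5) * mv := mul_le_mul_of_nonneg_right hmuc5 hmv0
      have hmm2 : mv * mu ≤ (c - K5) * mu := mul_le_mul_of_nonneg_right hmvc5 hmu0
      have h2Dmm : (d:ℝ) * (2 * (mu * mv)) ≤ (d:ℝ) * ((c - K5) * (mu + mv)) := by
        have := mul_le_mul_of_nonneg_left (add_le_add hmm1 hmm2) hD0.le
        nlinarith only [this]
      have hDcK5 : (d:ℝ) * ((c - K5) * (mu + mv))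
          = (mu + mv) - (d:ℝ) * K5 * (mu + mv) := by
        linear_combination (mu + mv) * hDc
      have hgap : 0 ≤ ((d:ℝ) * K5 - γ) * (mu + mv) :=
        mul_nonneg (by linarith) (by linarith)
      nlinarith only [hGu, hGv, hSlow, h2Dmm, hDcK5, hgap, hS0, hγ0, hmu0, hmv0]

lemma dHdt_unif {d : ℕ} [NeZero d] {δ α : ℝ} (hδ : 0 < δ) (hδc : δ ≤ 1 / (d : ℝ)) :
    dHdt d δ α (fun _ => 1 / (d : ℝ)) (fun _ => 1 / (d : ℝ)) = 0 := by
  have hd0 : ((d : ℕ) : ℝ) ≠ 0 := Nat.cast_ne_zero.mpr (NeZero.ne d)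
  rw [dHdt_eq, G_const hδ hδc _ (fun _ => rfl)]
  have hsum : (∑ _i : Fin d, 1 / (d:ℝ) * (1 / (d:ℝ))) = 1 / (d:ℝ) := by
    rw [Finset.sum_const, Finset.card_univ, Fintype.card_fin, nsmul_eq_mul]
    field_simp
  rw [hsum]; ring

lemma main_strict {d : ℕ} (hd3 : 3 ≤ d) {δ α ρ : ℝ} (hδ : 0 < δ)
    (hδρ : δ ≤ ρ) (hρ2d : ρ ≤ 1 / (2 * (d : ℝ)))
    (hαexp : Real.exp (2 * (d : ℝ) * (4 * (d : ℝ) ^ 2 + 4)) < α)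
    (hα1 : 1 ≤ α)
    (hcond : (d : ℝ) * (1 + 1 / (32 * (d : ℝ) * ((d : ℝ) - 1) ^ 2)) ^ ((1 : ℝ) - α)
        < 1 / (32 * (d : ℝ) * ((d : ℝ) - 1) ^ 2))
    (u v : Fin d → ℝ) (hu0 : ∀ i, 0 ≤ u i) (hu1 : ∑ i, u i = 1)
    (hv0 : ∀ i, 0 ≤ v i) (hv1 : ∑ i, v i = 1)
    (hS : 3 / 2 * ρ ≤ ∑ i, u i * v i)
    (hnb : ¬((u = fun _ => 1 / (d : ℝ)) ∧ (v = fun _ => 1 / (d : ℝ)))) :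
    dHdt d δ α u v < 0 := by
  haveI : NeZero d := ⟨by omega⟩
  have hD : (3 : ℝ) ≤ (d : ℝ) := by exact_mod_cast hd3
  have hSswap : 3 / 2 * ρ ≤ ∑ i, v i * u i := by
    rw [Finset.sum_congr rfl fun i (_ : i ∈ Finset.univ) => mul_comm (v i) (u i)]
    exact hS
  obtain ⟨ju, -, hju'⟩ := Finset.exists_min_image Finset.univ u univ_nonempty
  obtain ⟨jv, -, hjv'⟩ := Finset.exists_min_image Finset.univ v univ_nonempty
  have hju : ∀ i, u ju ≤ u i := fun i => hju' i (mem_univ i)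
  have hjv : ∀ i, v jv ≤ v i := fun i => hjv' i (mem_univ i)
  have hK54 : 1 / (16 * (d : ℝ) ^ 2 * ((d : ℝ) - 1) ^ 2)
      ≤ 1 / (2 * (d : ℝ) * ((d : ℝ) - 1) ^ 2) := by
    rw [div_le_div_iff₀ (by nlinarith) (by nlinarith)]
    nlinarith
  by_cases hA : 1 / (d : ℝ) - u ju ≤ 1 / (2 * (d : ℝ) * ((d : ℝ) - 1) ^ 2)
      ∧ 1 / (d : ℝ) - v jv ≤ 1 / (2 * (d : ℝ) * ((d : ℝ) - 1) ^ 2)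
  · rcases not_and_or.mp hnb with hun | hvn
    · exact main_half hd3 hδ hδρ hρ2d hαexp hα1 hcond u v hu0 hu1 hv0 hv1 hS hju hjv
        (Or.inl ⟨hA.1, hA.2, hun⟩)
    · rw [dHdt_swap]
      exact main_half hd3 hδ hδρ hρ2d hαexp hα1 hcond v u hv0 hv1 hu0 hu1 hSswap hjv hju
        (Or.inl ⟨hA.2, hA.1, hvn⟩)
  · rcases le_or_gt (1 / (d : ℝ) - u ju) (1 / (16 * (d : ℝ) ^ 2 * ((d : ℝ) - 1) ^ 2))
      with h5u | h5u
    · have h4v : 1 / (2 * (d : ℝ) * ((d : ℝ) - 1) ^ 2) < 1 / (d : ℝ) - v jv := by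
        by_contra hcon
        push_neg at hcon
        exact hA ⟨le_trans h5u hK54, hcon⟩
      exact main_half hd3 hδ hδρ hρ2d hαexp hα1 hcond u v hu0 hu1 hv0 hv1 hS hju hjv
        (Or.inr (Or.inl ⟨h5u, h4v⟩))
    · rcases le_or_gt (1 / (d : ℝ) - v jv) (1 / (16 * (d : ℝ) ^ 2 * ((d : ℝ) - 1) ^ 2))
        with h5v | h5v
      · have h4u : 1 / (2 * (d : ℝ) * ((d : ℝ) - 1) ^ 2) < 1 / (d : ℝ) - u ju := by
          by_contra hcon
          push_neg at hcon
          exact hA ⟨hcon, le_trans h5v hK54⟩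
        rw [dHdt_swap]
        exact main_half hd3 hδ hδρ hρ2d hαexp hα1 hcond v u hv0 hv1 hu0 hu1 hSswap hjv hju
          (Or.inr (Or.inl ⟨h5v, h4u⟩))
      · exact main_half hd3 hδ hδρ hρ2d hαexp hα1 hcond u v hu0 hu1 hv0 hv1 hS hju hjv
          (Or.inr (Or.inr ⟨h5u, h5v⟩))

end Stmt4Aux

open Stmt4Aux in
/-- Lemma `derivativenegative`: for every `d ≥ 3` there is `α₀ > 0` such that
for `α > α₀` and `δ > 0` with `2 d^{1/(α+1)} δ ≤ 1/d`, for every `(u,v) ∈ D` with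
`∑ u_i v_i ≥ (3/2) d^{1/(α+1)} δ` one has `dH/dt ≤ 0`, with equality iff `u = v = (1/d,…,1/d)`. -/
theorem stmt_4 (d : ℕ) (hd : 3 ≤ d) :
    ∃ α₀ : ℝ, 0 < α₀ ∧ ∀ α : ℝ, α₀ < α → ∀ δ : ℝ, 0 < δ →
      2 * (d : ℝ) ^ ((1 : ℝ) / (α + 1)) * δ ≤ 1 / d →
      ∀ u v : Fin d → ℝ,
        (∀ i, 0 ≤ u i) → ∑ i, u i = 1 → (∀ i, 0 ≤ v i) → ∑ i, v i = 1 →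
        (3 / 2) * (d : ℝ) ^ ((1 : ℝ) / (α + 1)) * δ ≤ ∑ i, u i * v i →
        (dHdt d δ α u v ≤ 0 ∧
          (dHdt d δ α u v = 0 ↔
            (u = fun _ => 1 / (d : ℝ)) ∧ (v = fun _ => 1 / (d : ℝ)))) := by
  haveI : NeZero d := ⟨by omega⟩
  have hD : (3 : ℝ) ≤ (d : ℝ) := by exact_mod_cast hd
  have hD0 : (0 : ℝ) < (d : ℝ) := by linarith
  have hD1 : (0 : ℝ) < (d : ℝ) - 1 := by linarith
  refine ⟨Real.exp (2 * (d:ℝ) * (4 * (d:ℝ)^2 + 4)) + (d:ℝ) * (32 * (d:ℝ) * ((d:ℝ)-1)^2)^2 + 4,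
    by positivity, ?_⟩
  intro α hα δ hδ hδd u v hu0 hu1 hv0 hv1 hSh
  have hexp0 : 0 < Real.exp (2 * (d:ℝ) * (4 * (d:ℝ)^2 + 4)) := Real.exp_pos _
  have hXpos : 0 < (d:ℝ) * (32 * (d:ℝ) * ((d:ℝ)-1)^2)^2 := by positivity
  have hαexp : Real.exp (2 * (d:ℝ) * (4 * (d:ℝ)^2 + 4)) < α := by linarith
  have hexpbig : 240 ≤ Real.exp (2 * (d:ℝ) * (4 * (d:ℝ)^2 + 4)) := by
    have h1 := Real.add_one_le_exp (2 * (d:ℝ) * (4 * (d:ℝ)^2 + 4))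
    nlinarith
  have hα1 : 1 ≤ α := by linarith
  have hα2 : 2 ≤ α := by linarith
  -- the exploration scale ρ
  set ρ := (d:ℝ) ^ ((1:ℝ) / (α + 1)) * δ with hρdef
  have hfac1 : 1 ≤ (d:ℝ) ^ ((1:ℝ) / (α + 1)) := by
    have h0 : (d:ℝ) ^ (0:ℝ) ≤ (d:ℝ) ^ ((1:ℝ) / (α + 1)) := by
      apply Real.rpow_le_rpow_of_exponent_le (by linarith)
      positivity
    rwa [Real.rpow_zero] at h0
  have hδρ : δ ≤ ρ := by
    rw [hρdef]
    nlinarith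
  have hρ2d : ρ ≤ 1 / (2 * (d:ℝ)) := by
    have h1 : 2 * ρ ≤ 1 / (d:ℝ) := by rw [hρdef]; linarith [hδd]
    have h2 : 1 / (2 * (d:ℝ)) = (1 / (d:ℝ)) / 2 := by
      rw [div_div, mul_comm]
    linarith
  have hS : 3 / 2 * ρ ≤ ∑ i, u i * v i := by
    rw [hρdef]
    calc 3 / 2 * ((d:ℝ) ^ ((1:ℝ) / (α + 1)) * δ)
        = 3 / 2 * (d:ℝ) ^ ((1:ℝ) / (α + 1)) * δ := by ring
      _ ≤ ∑ i, u i * v i := hSh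
  -- Bernoulli condition for claim I
  have hγl0 : (0:ℝ) < 1 / (32 * (d:ℝ) * ((d:ℝ)-1)^2) := by positivity
  have hcond : (d : ℝ) * (1 + 1 / (32 * (d : ℝ) * ((d : ℝ) - 1) ^ 2)) ^ ((1 : ℝ) - α)
      < 1 / (32 * (d : ℝ) * ((d : ℝ) - 1) ^ 2) := by
    set γ := 1 / (32 * (d:ℝ) * ((d:ℝ)-1)^2) with hγdef
    have hγX : γ * (32 * (d:ℝ) * ((d:ℝ)-1)^2) = 1 := by
      rw [hγdef]; field_simp
    clear_value γ
    have h1γ : (0:ℝ) < 1 + γ := by linarith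
    have hb : 1 + (α - 1) * γ ≤ (1 + γ) ^ (α - 1) := bern (by linarith) hγl0.le
    have hαbig : (d:ℝ) * (32 * (d:ℝ) * ((d:ℝ)-1)^2)^2 < α - 1 := by linarith
    have hgb : (d:ℝ) < γ * (1 + γ) ^ (α - 1) := by
      have h2 : γ * (1 + (α - 1) * γ) ≤ γ * (1 + γ) ^ (α - 1) :=
        mul_le_mul_of_nonneg_left hb hγl0.le
      have h3 : (d:ℝ) < γ * (1 + (α - 1) * γ) := by
        have h4 : (α - 1) * γ ^ 2 > (d:ℝ) := by
          have h5 : γ ^ 2 * (32 * (d:ℝ) * ((d:ℝ)-1)^2)^2 = 1 := by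
            have := hγX
            nlinarith [hγX]
          nlinarith [mul_lt_mul_of_pos_right hαbig (by positivity : (0:ℝ) < γ ^ 2), h5]
        nlinarith [hγl0]
      linarith
    have hp : 0 < (1 + γ) ^ ((1:ℝ) - α) := Real.rpow_pos_of_pos h1γ _
    have hpow : (1 + γ) ^ (α - 1) * (1 + γ) ^ ((1:ℝ) - α) = 1 := by
      rw [← Real.rpow_add h1γ, show α - 1 + (1 - α) = 0 by ring, Real.rpow_zero]
    calc (d:ℝ) * (1 + γ) ^ ((1:ℝ) - α)
        < (γ * (1 + γ) ^ (α - 1)) * (1 + γ) ^ ((1:ℝ) - α) :=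
          mul_lt_mul_of_pos_right hgb hp
      _ = γ := by rw [mul_assoc, hpow, mul_one]
  -- split on whether (u,v) is the uniform pair
  by_cases hb : (u = fun _ => 1 / (d : ℝ)) ∧ (v = fun _ => 1 / (d : ℝ))
  · have hδc : δ ≤ 1 / (d:ℝ) := by
      have : 1 / (2 * (d:ℝ)) ≤ 1 / (d:ℝ) := by
        rw [div_le_div_iff₀ (by linarith) hD0]; nlinarith
      linarith
    have h0 : dHdt d δ α u v = 0 := by
      rw [hb.1, hb.2]; exact dHdt_unif hδ hδc
    exact ⟨le_of_eq h0, by constructor <;> intro _ <;> [exact hb; exact h0]⟩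
  · have hlt : dHdt d δ α u v < 0 :=
      main_strict hd hδ hδρ hρ2d hαexp hα1 hcond u v hu0 hu1 hv0 hv1 hS hb
    refine ⟨hlt.le, ?_, ?_⟩
    · intro h0; exact absurd h0 (ne_of_lt hlt)
    · intro hb'; exact absurd hb' hb
end

section
/- Let d ≥ 2 be an integer. Every vector θ = (θ_1, …, θ_{2d}) ∈ ℝ^{2d} with Euclidean norm 1 satisfying ∑_{k=1}^d θ_k = 0 and ∑_{k=d+1}^{2d} θ_k = 0 has a coordinate satisfying max_{1 ≤ k ≤ 2d} θ_k ≥ 1/((d−1)√(2d)). -/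
open Finset

/-- Every unit vector `θ ∈ ℝ^{2d}` (Euclidean norm) in the tangent space
`TD = {(u,v) : ∑ u_i = 0, ∑ v_i = 0}` has a coordinate `≥ 1/((d-1)√(2d))`. -/
theorem stmt_9 (d : ℕ) (hd : 2 ≤ d) (θ : Fin d ⊕ Fin d → ℝ)
    (hnorm : ∑ k, (θ k) ^ 2 = 1)
    (hsum1 : ∑ i : Fin d, θ (Sum.inl i) = 0)
    (hsum2 : ∑ i : Fin d, θ (Sum.inr i) = 0) :
    ∃ k, 1 / (((d : ℝ) - 1) * Real.sqrt (2 * d)) ≤ θ k := by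
  have hdpos : 0 < d := by omega
  have i0 : Fin d := ⟨0, hdpos⟩
  obtain ⟨k₀, -, hk₀⟩ := Finset.exists_max_image Finset.univ θ
    ⟨Sum.inl i0, Finset.mem_univ _⟩
  set M := θ k₀ with hMdef
  refine ⟨k₀, ?_⟩
  have hle : ∀ k, θ k ≤ M := fun k => hk₀ k (Finset.mem_univ k)
  have hd1 : (1:ℝ) ≤ (d:ℝ) - 1 := by
    have : (2:ℝ) ≤ d := by exact_mod_cast hd
    linarith
  have hM0 : 0 ≤ M := by
    by_contra h
    push_neg at h
    have hneg : ∑ i : Fin d, θ (Sum.inl i) < 0 :=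
      Finset.sum_neg (fun i _ => lt_of_le_of_lt (hle _) h) ⟨i0, Finset.mem_univ _⟩
    linarith
  have hcard : ((Finset.univ.erase i0).card : ℝ) = (d:ℝ) - 1 := by
    rw [Finset.card_erase_of_mem (Finset.mem_univ i0), Finset.card_univ, Fintype.card_fin]
    rw [Nat.cast_sub (by omega)]
    norm_num
  have hlow : ∀ k, -(((d:ℝ)-1) * M) ≤ θ k := by
    have key : ∀ (f : Fin d → ℝ), (∀ i, f i ≤ M) → ∑ i, f i = 0 →
        ∀ i, -(((d:ℝ)-1) * M) ≤ f i := by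
      intro f hf hsum i
      have hsplit : f i + ∑ j ∈ Finset.univ.erase i, f j = 0 := by
        rw [Finset.add_sum_erase _ _ (Finset.mem_univ i)]; exact hsum
      have hb : ∑ j ∈ Finset.univ.erase i, f j ≤ ((d:ℝ)-1) * M := by
        calc ∑ j ∈ Finset.univ.erase i, f j ≤ ∑ _j ∈ Finset.univ.erase i, M :=
              Finset.sum_le_sum (fun j _ => hf j)
          _ = ((d:ℝ)-1) * M := by
              rw [Finset.sum_const, nsmul_eq_mul,
                Finset.card_erase_of_mem (Finset.mem_univ i), Finset.card_univ,
                Fintype.card_fin, Nat.cast_sub (by omega)]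
              norm_num
      linarith
    intro k
    cases k with
    | inl i => exact key (fun j => θ (Sum.inl j)) (fun j => hle _) hsum1 i
    | inr i => exact key (fun j => θ (Sum.inr j)) (fun j => hle _) hsum2 i
  have hsq : ∀ k, (θ k) ^ 2 ≤ (((d:ℝ)-1) * M) ^ 2 := by
    intro k
    have h1 : θ k ≤ ((d:ℝ)-1) * M := le_trans (hle k) (by nlinarith)
    exact sq_le_sq' (hlow k) h1
  have hsumle : (1:ℝ) ≤ 2 * d * ((((d:ℝ)-1) * M) ^ 2) := by
    have : ∑ k, (θ k) ^ 2 ≤ ∑ _k : Fin d ⊕ Fin d, ((((d:ℝ)-1) * M) ^ 2) :=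
      Finset.sum_le_sum (fun k _ => hsq k)
    rw [hnorm, Finset.sum_const, nsmul_eq_mul, Finset.card_univ] at this
    simpa [Fintype.card_sum, Fintype.card_fin, two_mul, add_mul] using this
  set s := Real.sqrt (2 * d) with hs
  have hspos : 0 < s := Real.sqrt_pos.mpr (by positivity)
  have hs2 : s ^ 2 = 2 * d := Real.sq_sqrt (by positivity)
  rw [div_le_iff₀ (by positivity)]
  nlinarith [mul_nonneg (mul_nonneg (by linarith : (0:ℝ) ≤ (d:ℝ)-1) hspos.le) hM0]
end

section
/- For every integer d ≥ 2 there exists α(d) > 0 such that for all α > α(d) and all vectors u, v ∈ ℝ^d with u_i > 0, v_i > 0 for all i and ∑_{i=1}^d u_i = ∑_{i=1}^d v_i = 1, the inequality 2 ∑_{i=1}^d u_i v_i ≥ (∑_{i=1}^d u_i^{−α})/(∑_{i=1}^d u_i^{−(1+α)}) + (∑_{i=1}^d v_i^{−α})/(∑_{i=1}^d v_i^{−(1+α)}) holds, and equality holds if and only if u_i = v_i = 1/d for all i. -/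
open Finset

namespace Stmt10Aux

set_option maxHeartbeats 1000000 in
/-- Core scalar inequality: for `m ≤ x` close to `m`, with large exponent `β`,
`16 d² (x-m) m^(-β) ≤ m^(-β) - x^(-β)`. -/
lemma core {d : ℕ} (hd : 2 ≤ d) {β m x : ℝ} (hβ : 64 * (d:ℝ)^3 < β)
    (hm : 0 < m) (hmx : m ≤ x) (hx2 : x ≤ 2 / (d:ℝ))
    (hxm : x - m ≤ 1 / (64 * (d:ℝ)^2)) :
    16 * (d:ℝ)^2 * (x - m) * m ^ (-β) ≤ m ^ (-β) - x ^ (-β) := by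
  have hd2 : (2:ℝ) ≤ (d:ℝ) := by exact_mod_cast hd
  have hd0 : (0:ℝ) < (d:ℝ) := by linarith
  have hcube : (4:ℝ)*(d:ℝ) ≤ (d:ℝ)^3 := by
    nlinarith [mul_nonneg (mul_nonneg (le_of_lt hd0) (by linarith : (0:ℝ) ≤ (d:ℝ) - 2))
      (by linarith : (0:ℝ) ≤ (d:ℝ) + 2)]
  have hβ1 : (1:ℝ) ≤ β := by nlinarith [hcube, hd0]
  have hβ0 : (0:ℝ) < β := by linarith
  have hx0 : 0 < x := lt_of_lt_of_le hm hmx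
  obtain ⟨s, hs_def⟩ : ∃ s : ℝ, s = (x - m) / x := ⟨_, rfl⟩
  have hs0 : 0 ≤ s := by
    rw [hs_def]; exact div_nonneg (by linarith) (le_of_lt hx0)
  have hs1 : s < 1 := by
    rw [hs_def, div_lt_one hx0]; linarith
  have hxs : x * s = x - m := by
    rw [hs_def]; field_simp
  have hr : m / x = 1 - s := by
    rw [hs_def]; field_simp; ring
  -- Bernoulli
  have hbern : 1 + β * s ≤ (1 + s) ^ β :=
    one_add_mul_self_le_rpow_one_add (by linarith) hβ1
  have hbs : (0:ℝ) < 1 + β * s := by positivity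
  have h1 : (1 - s) ≤ (1 + s)⁻¹ := by
    rw [← one_div, le_div_iff₀ (by linarith : (0:ℝ) < 1 + s)]
    nlinarith
  have h3 : (1 - s) ^ β ≤ ((1 + s) ^ β)⁻¹ := by
    calc (1 - s) ^ β ≤ ((1 + s)⁻¹) ^ β :=
          Real.rpow_le_rpow (by linarith) h1 (le_of_lt hβ0)
      _ = ((1 + s) ^ β)⁻¹ := Real.inv_rpow (by linarith) β
  have h5 : ((1 + s) ^ β)⁻¹ ≤ (1 + β * s)⁻¹ := inv_anti₀ hbs hbern
  obtain ⟨q, hq_def⟩ : ∃ q : ℝ, q = (1 - s) ^ β := ⟨_, rfl⟩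
  have hq0 : 0 ≤ q := hq_def ▸ Real.rpow_nonneg (by linarith) β
  have hq : q * (1 + β * s) ≤ 1 := by
    have : q ≤ (1 + β * s)⁻¹ := le_trans (hq_def ▸ h3) h5
    calc q * (1 + β * s) ≤ (1 + β * s)⁻¹ * (1 + β * s) :=
          mul_le_mul_of_nonneg_right this (le_of_lt hbs)
      _ = 1 := by field_simp
  -- numeric bound : 16 d² x (1 + β s) ≤ β
  have h16 : 16 * (d:ℝ)^2 * x * (1 + β * s) ≤ β := by
    have e1 : 16 * (d:ℝ)^2 * x * (1 + β * s) = 16*(d:ℝ)^2*x + 16*(d:ℝ)^2*β*(x*s) := by ring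
    rw [e1, hxs]
    have b1 : 16 * (d:ℝ)^2 * x ≤ 32 * (d:ℝ) := by
      have hb := mul_le_mul_of_nonneg_left hx2 (by positivity : (0:ℝ) ≤ (d:ℝ)^2)
      have e2 : (d:ℝ)^2 * (2/(d:ℝ)) = 2*(d:ℝ) := by field_simp
      nlinarith [hb, e2]
    have b2 : 16 * (d:ℝ)^2 * β * (x - m) ≤ β / 4 := by
      have hb := mul_le_mul_of_nonneg_left hxm (by positivity : (0:ℝ) ≤ 16*(d:ℝ)^2)
      have e3 : 16 * (d:ℝ)^2 * (1/(64*(d:ℝ)^2)) = 1/4 := by field_simp; ring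
      have hb2 : 16 * (d:ℝ)^2 * (x - m) ≤ 1/4 := by nlinarith [hb, e3]
      have := mul_le_mul_of_nonneg_left hb2 (le_of_lt hβ0)
      nlinarith [this]
    -- 32 d + β/4 ≤ β since β > 64 d³ ≥ 256 d
    linarith [hcube]
  -- conclude  16 d² (x-m) ≤ 1 - q
  have h9 : β * s ≤ (1 - q) * (1 + β * s) := by nlinarith
  have h10 : 16 * (d:ℝ)^2 * x * s * (1 + β * s) ≤ β * s :=
    by nlinarith [mul_le_mul_of_nonneg_right h16 hs0]
  have h11 : 16 * (d:ℝ)^2 * (x - m) ≤ 1 - q := by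
    have h12 : 16 * (d:ℝ)^2 * x * s * (1 + β * s) ≤ (1 - q) * (1 + β * s) := le_trans h10 h9
    have h13 : 16 * (d:ℝ)^2 * x * s ≤ 1 - q := le_of_mul_le_mul_right
      (by calc 16 * (d:ℝ)^2 * x * s * (1+β*s) ≤ (1-q)*(1+β*s) := h12) hbs
    calc 16 * (d:ℝ)^2 * (x - m) = 16 * (d:ℝ)^2 * (x * s) := by rw [hxs]
      _ = 16 * (d:ℝ)^2 * x * s := by ring
      _ ≤ 1 - q := h13
  -- translate back
  have hmb : (0:ℝ) < m ^ (-β) := Real.rpow_pos_of_pos hm _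
  have hq_eq : m ^ (-β) * q = x ^ (-β) := by
    rw [hq_def, ← hr, Real.div_rpow (le_of_lt hm) (le_of_lt hx0),
      Real.rpow_neg (le_of_lt hm), Real.rpow_neg (le_of_lt hx0)]
    have hxb : (0:ℝ) < x ^ β := Real.rpow_pos_of_pos hx0 _
    have hmbb : (0:ℝ) < m ^ β := Real.rpow_pos_of_pos hm _
    field_simp
  have := mul_le_mul_of_nonneg_right h11 (le_of_lt hmb)
  nlinarith [this, hq_eq]

lemma sum_const_min {d : ℕ} (c : ℝ) : (∑ _i : Fin d, c) = (d:ℝ) * c := by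
  rw [Finset.sum_const, Finset.card_univ, Fintype.card_fin, nsmul_eq_mul]

/-- basic facts about the minimum of a simplex vector -/
lemma simplex_min_le {d : ℕ} (hd : 2 ≤ d) {u : Fin d → ℝ}
    (hsu : ∑ i, u i = 1) (i₀ : Fin d) (hmin : ∀ i, u i₀ ≤ u i) :
    (d:ℝ) * u i₀ ≤ 1 := by
  calc (d:ℝ) * u i₀ = ∑ _i : Fin d, u i₀ := (sum_const_min _).symm
    _ ≤ ∑ i, u i := Finset.sum_le_sum (fun i _ => hmin i)
    _ = 1 := hsu

lemma simplex_max_le {d : ℕ} (hd : 2 ≤ d) {u : Fin d → ℝ}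
    (hsu : ∑ i, u i = 1) (i₀ : Fin d) (hmin : ∀ i, u i₀ ≤ u i) (i : Fin d) :
    u i ≤ 1 - ((d:ℝ) - 1) * u i₀ := by
  have h1 : u i + ∑ j ∈ univ.erase i, u j = 1 := by
    rw [Finset.add_sum_erase _ u (mem_univ i)]; exact hsu
  have h2 : ((d - 1 : ℕ):ℝ) * u i₀ ≤ ∑ j ∈ univ.erase i, u j := by
    calc ((d - 1 : ℕ):ℝ) * u i₀ = ∑ _j ∈ univ.erase i, u i₀ := by
          rw [Finset.sum_const, Finset.card_erase_of_mem (mem_univ i), Finset.card_univ,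
            Fintype.card_fin, nsmul_eq_mul]
      _ ≤ ∑ j ∈ univ.erase i, u j := Finset.sum_le_sum (fun j _ => hmin j)
  have h3 : ((d - 1 : ℕ):ℝ) = (d:ℝ) - 1 := by
    have h4 : (1:ℕ) ≤ d := by omega
    push_cast [Nat.cast_sub h4]; ring
  rw [h3] at h2
  linarith

set_option maxHeartbeats 2000000 in
/-- NEAR-uniform bound: `∑ uᵢ uᵢ^(-β) ≤ (1/d - 2σ) ∑ uᵢ^(-β)`. -/
lemma near {d : ℕ} (hd : 2 ≤ d) {β : ℝ} (hβ : 64 * (d:ℝ)^3 < β)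
    {u : Fin d → ℝ} (hu : ∀ i, 0 < u i) (hsu : ∑ i, u i = 1)
    (i₀ : Fin d) (hmin : ∀ i, u i₀ ≤ u i)
    (hM : 1/(d:ℝ) - u i₀ ≤ 1/(64*(d:ℝ)^3)) :
    ∑ i, u i * u i ^ (-β) ≤
      (1/(d:ℝ) - 2 * ∑ i, (u i - 1/(d:ℝ))^2) * ∑ i, u i ^ (-β) := by
  have hd2 : (2:ℝ) ≤ (d:ℝ) := by exact_mod_cast hd
  have hd0 : (0:ℝ) < (d:ℝ) := by linarith
  have hcube : (0:ℝ) < (d:ℝ)^3 := by positivity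
  have hβ0 : (0:ℝ) < β := by nlinarith [hcube]
  set w : Fin d → ℝ := fun i => u i ^ (-β) with hw_def
  have hw : ∀ i, 0 < w i := fun i => Real.rpow_pos_of_pos (hu i) _
  have hwanti : ∀ i j, u i ≤ u j → w j ≤ w i := fun i j hij =>
    Real.rpow_le_rpow_of_nonpos (hu i) hij (by linarith)
  have hm0 : 0 < u i₀ := hu i₀
  have hdm : (d:ℝ) * u i₀ ≤ 1 := simplex_min_le hd hsu i₀ hmin
  have hmd : u i₀ ≤ 1/(d:ℝ) := by
    rw [le_div_iff₀ hd0]; linarith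
  have hmax : ∀ i, u i ≤ 1 - ((d:ℝ) - 1) * u i₀ := simplex_max_le hd hsu i₀ hmin
  -- bounds for applying `core`
  have hbound1 : ∀ i, u i - u i₀ ≤ 1/(64*(d:ℝ)^2) := by
    intro i
    have h1 := hmax i
    have h2 : (d:ℝ) * (1/(d:ℝ) - u i₀) ≤ (d:ℝ) * (1/(64*(d:ℝ)^3)) :=
      mul_le_mul_of_nonneg_left hM (le_of_lt hd0)
    have e2 : (d:ℝ) * (1/(64*(d:ℝ)^3)) = 1/(64*(d:ℝ)^2) := by field_simp
    have e3 : (d:ℝ) * (1/(d:ℝ) - u i₀) = 1 - (d:ℝ) * u i₀ := by field_simp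
    linarith
  have hbound2 : ∀ i, u i ≤ 2/(d:ℝ) := by
    intro i
    have h1 := hbound1 i
    have h2 : 1/(64*(d:ℝ)^2) ≤ 1/(d:ℝ) := by
      apply one_div_le_one_div_of_le hd0; nlinarith
    have e : 2/(d:ℝ) = 1/(d:ℝ) + 1/(d:ℝ) := by ring
    linarith
  -- per-term core bound
  have hper : ∀ i, 16*(d:ℝ)^2 * (u i - u i₀)^2 * w i₀ ≤ (w i₀ - w i) * (u i - u i₀) := by
    intro i
    have hcore := core hd hβ hm0 (hmin i) (hbound2 i) (hbound1 i)
    have hnn : 0 ≤ u i - u i₀ := sub_nonneg.2 (hmin i)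
    have h := mul_le_mul_of_nonneg_right hcore hnn
    simp only [hw_def]
    nlinarith [h]
  -- double-sum machinery
  set T : Fin d → Fin d → ℝ := fun i j => (w i - w j) * (u j - u i) with hT_def
  have hTnn : ∀ i j, 0 ≤ T i j := by
    intro i j
    rcases le_total (u i) (u j) with h | h
    · have hww : w j ≤ w i := hwanti i j h
      simp only [hT_def]
      exact mul_nonneg (by linarith) (by linarith)
    · have hww : w i ≤ w j := hwanti j i h
      simp only [hT_def]
      nlinarith [mul_nonneg (by linarith : (0:ℝ) ≤ w j - w i) (by linarith : (0:ℝ) ≤ u i - u j)]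
  have hTsymm : ∀ i j, T i j = T j i := by intro i j; simp only [hT_def]; ring
  have hTzero : T i₀ i₀ = 0 := by simp only [hT_def]; ring
  set S : ℝ := ∑ i, T i₀ i with hS_def
  set Q : ℝ := ∑ i, (u i - u i₀)^2 with hQ_def
  have hQnn : 0 ≤ Q := Finset.sum_nonneg fun i _ => sq_nonneg _
  have hS_lb : 16*(d:ℝ)^2 * Q * w i₀ ≤ S := by
    rw [hS_def, hQ_def, Finset.mul_sum, Finset.sum_mul]
    apply Finset.sum_le_sum
    intro i _
    have := hper i
    simp only [hT_def]
    nlinarith [this]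
  have hP_lb : 2 * S ≤ ∑ i, ∑ j, T i j := by
    have h1 : ∑ i, ∑ j, T i j = (∑ j, T i₀ j) + ∑ i ∈ univ.erase i₀, ∑ j, T i j :=
      (Finset.add_sum_erase univ _ (mem_univ i₀)).symm
    have h3 : ∑ i ∈ univ.erase i₀, T i i₀ ≤ ∑ i ∈ univ.erase i₀, ∑ j, T i j :=
      Finset.sum_le_sum fun i _ => Finset.single_le_sum (fun j _ => hTnn i j) (mem_univ i₀)
    have h4 : ∑ i ∈ univ.erase i₀, T i i₀ = S := by
      have h5 : ∑ i, T i i₀ = S := by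
        rw [hS_def]; exact Finset.sum_congr rfl (fun i _ => hTsymm i i₀)
      have h6 : T i₀ i₀ + ∑ i ∈ univ.erase i₀, T i i₀ = ∑ i, T i i₀ :=
        Finset.add_sum_erase univ (fun i => T i i₀) (mem_univ i₀)
      rw [hTzero] at h6; linarith
    have h7 : (∑ j, T i₀ j) = S := rfl
    linarith
  have hWub : ∑ i, w i ≤ (d:ℝ) * w i₀ := by
    calc ∑ i, w i ≤ ∑ _i : Fin d, w i₀ := Finset.sum_le_sum (fun i _ => hwanti i₀ i (hmin i))
      _ = (d:ℝ) * w i₀ := sum_const_min _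
  -- the key identity
  have hPid : ∑ i, ∑ j, T i j = 2*(∑ i, w i) - 2*(d:ℝ)*(∑ i, u i * w i) := by
    have e1 : ∀ i, ∑ j, T i j
        = w i * (∑ j, u j) - (d:ℝ)*(w i * u i) - (∑ j, u j * w j) + u i * (∑ j, w j) := by
      intro i
      calc ∑ j, T i j = ∑ j, (w i * u j - w i * u i - u j * w j + u i * w j) :=
            Finset.sum_congr rfl (fun j _ => by simp only [hT_def]; ring)
        _ = ((∑ j, w i * u j) - (∑ _j : Fin d, w i * u i) - (∑ j, u j * w j))
              + (∑ j, u i * w j) := by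
            rw [Finset.sum_add_distrib, Finset.sum_sub_distrib, Finset.sum_sub_distrib]
        _ = w i * (∑ j, u j) - (d:ℝ)*(w i * u i) - (∑ j, u j * w j) + u i * (∑ j, w j) := by
            rw [← Finset.mul_sum, ← Finset.mul_sum, ← Finset.mul_sum, sum_const_min]
            ring
    calc ∑ i, ∑ j, T i j
        = ∑ i, (w i * (∑ j, u j) - (d:ℝ)*(w i * u i) - (∑ j, u j * w j) + u i * (∑ j, w j)) :=
          Finset.sum_congr rfl (fun i _ => e1 i)
      _ = 2*(∑ i, w i) - 2*(d:ℝ)*(∑ i, u i * w i) := by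
          simp only [hsu, mul_one]
          rw [Finset.sum_add_distrib, Finset.sum_sub_distrib, Finset.sum_sub_distrib,
            ← Finset.mul_sum, Finset.sum_const, Finset.card_univ, Fintype.card_fin,
            nsmul_eq_mul, ← Finset.sum_mul, hsu, one_mul]
          have e2 : ∑ i, w i * u i = ∑ i, u i * w i :=
            Finset.sum_congr rfl (fun i _ => mul_comm _ _)
          rw [e2]; ring
  -- σ ≤ Q
  have ha_sum : ∑ i, (u i - u i₀) = 1 - (d:ℝ)*u i₀ := by
    rw [Finset.sum_sub_distrib, hsu, sum_const_min]
  have hσQ : (∑ i, (u i - 1/(d:ℝ))^2) ≤ Q := by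
    have e : ∀ i ∈ (univ : Finset (Fin d)), (u i - 1/(d:ℝ))^2
        = ((u i - u i₀)^2 - (2*(1/(d:ℝ) - u i₀))*(u i - u i₀)) + (1/(d:ℝ) - u i₀)^2 :=
      fun i _ => by ring
    rw [Finset.sum_congr rfl e, Finset.sum_add_distrib, Finset.sum_sub_distrib,
      ← Finset.mul_sum, ha_sum, Finset.sum_const, card_univ, Fintype.card_fin, nsmul_eq_mul]
    have e2 : 1 - (d:ℝ)*u i₀ = (d:ℝ)*(1/(d:ℝ) - u i₀) := by field_simp
    have hM0 : 0 ≤ 1/(d:ℝ) - u i₀ := by linarith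
    rw [hQ_def]
    nlinarith [hM0, hd0, sq_nonneg (1/(d:ℝ) - u i₀)]
  have hww : 0 < w i₀ := hw i₀
  have hWpos : 0 < ∑ i, w i := Finset.sum_pos (fun i _ => hw i) ⟨i₀, mem_univ _⟩
  have hσnn : 0 ≤ ∑ i, (u i - 1/(d:ℝ))^2 := Finset.sum_nonneg fun i _ => sq_nonneg _
  set σ : ℝ := ∑ i, (u i - 1/(d:ℝ))^2 with hσ_def
  have c1 : 4*(d:ℝ)*σ*(∑ i, w i) ≤ 4*(d:ℝ)^2*Q*(w i₀) := by
    have := mul_le_mul hσQ hWub (le_of_lt hWpos) hQnn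
    nlinarith [this, hd0]
  have c2 : 4*(d:ℝ)^2*Q*(w i₀) ≤ 2*S := by
    nlinarith [hS_lb, mul_nonneg hQnn (le_of_lt hww), hd0, sq_nonneg (d:ℝ)]
  have c3 : 2*(d:ℝ)*(∑ i, u i * w i) ≤ 2*(∑ i, w i) - 4*(d:ℝ)*σ*(∑ i, w i) := by
    linarith [c1, c2, hP_lb, hPid.symm.le, hPid.le]
  have e5 : 2*(d:ℝ)*((1/(d:ℝ) - 2*σ)*(∑ i, w i)) = 2*(∑ i, w i) - 4*(d:ℝ)*σ*(∑ i, w i) := by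
    field_simp; ring
  have hfinal : 2*(d:ℝ)*(∑ i, u i * w i) ≤ 2*(d:ℝ)*((1/(d:ℝ) - 2*σ)*(∑ i, w i)) := by
    rw [e5]; exact c3
  exact le_of_mul_le_mul_left hfinal (by positivity)

set_option maxHeartbeats 1000000 in
/-- always-valid min bound : `∑ uᵢ uᵢ^(-β) ≤ m (1 + d/β) ∑ uᵢ^(-β)`. -/
lemma minBound {d : ℕ} (hd : 2 ≤ d) {β : ℝ} (hβ1 : 1 ≤ β)
    {u : Fin d → ℝ} (hu : ∀ i, 0 < u i)
    (i₀ : Fin d) (hmin : ∀ i, u i₀ ≤ u i) :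
    ∑ i, u i * u i ^ (-β) ≤ (u i₀ * (1 + (d:ℝ)/β)) * ∑ i, u i ^ (-β) := by
  have hd0 : (0:ℝ) < (d:ℝ) := by
    have : (0:ℕ) < d := by omega
    exact_mod_cast this
  have hβ0 : (0:ℝ) < β := by linarith
  set w : Fin d → ℝ := fun i => u i ^ (-β) with hw_def
  have hw : ∀ i, 0 < w i := fun i => Real.rpow_pos_of_pos (hu i) _
  have hm0 : 0 < u i₀ := hu i₀
  have hterm : ∀ i, (u i - u i₀) * w i ≤ (u i₀/β) * w i₀ := by
    intro i
    have hs0 : 0 ≤ (u i - u i₀)/u i₀ :=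
      div_nonneg (by linarith [hmin i]) (le_of_lt hm0)
    have hb := one_add_mul_self_le_rpow_one_add (s := (u i - u i₀)/u i₀) (by linarith) hβ1
    have e : (1:ℝ) + (u i - u i₀)/u i₀ = u i/u i₀ := by field_simp; ring
    rw [e] at hb
    rw [Real.div_rpow (le_of_lt (hu i)) (le_of_lt hm0)] at hb
    -- hb : 1 + β * ((u i - u i₀)/u i₀) ≤ u i ^ β / u i₀ ^ β
    have hX : (0:ℝ) < u i ^ β := Real.rpow_pos_of_pos (hu i) _
    have hM : (0:ℝ) < u i₀ ^ β := Real.rpow_pos_of_pos hm0 _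
    have hcross : β * (u i - u i₀) * u i₀ ^ β ≤ u i₀ * u i ^ β := by
      have h2 : β * ((u i - u i₀)/u i₀) ≤ u i ^ β / u i₀ ^ β := by
        linarith [mul_nonneg (le_of_lt hβ0) hs0]
      have e' : β * ((u i - u i₀)/u i₀) = (β * (u i - u i₀))/u i₀ := by ring
      rw [e', div_le_div_iff₀ hm0 hM] at h2
      nlinarith [h2]
    simp only [hw_def]
    rw [Real.rpow_neg (le_of_lt (hu i)), Real.rpow_neg (le_of_lt hm0)]
    rw [← div_eq_mul_inv, ← div_eq_mul_inv, div_le_div_iff₀ hX hM]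
    -- goal : (u i - u i₀) * u i₀ ^ β ≤ u i₀ / β * u i ^ β
    have e2 : (u i₀/β) * u i ^ β * β = u i₀ * u i ^ β := by field_simp
    nlinarith [hcross, hβ0]
  have hsplit : ∑ i, u i * w i = u i₀ * (∑ i, w i) + ∑ i, (u i - u i₀) * w i := by
    rw [Finset.mul_sum, ← Finset.sum_add_distrib]
    exact Finset.sum_congr rfl (fun i _ => by ring)
  have h2 : ∑ i, (u i - u i₀) * w i ≤ (d:ℝ) * ((u i₀/β) * w i₀) := by
    calc ∑ i, (u i - u i₀) * w i ≤ ∑ _i : Fin d, (u i₀/β) * w i₀ :=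
          Finset.sum_le_sum (fun i _ => hterm i)
      _ = (d:ℝ) * ((u i₀/β) * w i₀) := sum_const_min _
  have h3 : w i₀ ≤ ∑ i, w i :=
    Finset.single_le_sum (fun i _ => le_of_lt (hw i)) (mem_univ i₀)
  have h4 : (d:ℝ) * ((u i₀/β) * w i₀) ≤ (u i₀ * ((d:ℝ)/β)) * (∑ i, w i) := by
    have hc : 0 ≤ (d:ℝ) * (u i₀/β) := by positivity
    have e : (d:ℝ) * ((u i₀/β) * w i₀) = ((d:ℝ) * (u i₀/β)) * w i₀ := by ring
    have e2 : (u i₀ * ((d:ℝ)/β)) * (∑ i, w i) = ((d:ℝ) * (u i₀/β)) * (∑ i, w i) := by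
      ring
    rw [e, e2]
    exact mul_le_mul_of_nonneg_left h3 hc
  have e6 : (u i₀ * (1 + (d:ℝ)/β)) * (∑ i, w i)
      = u i₀ * (∑ i, w i) + (u i₀ * ((d:ℝ)/β)) * (∑ i, w i) := by ring
  rw [hsplit, e6]
  linarith

/-- inner product lower bound via minima. -/
lemma ip1 {d : ℕ} {u v : Fin d → ℝ}
    (hsu : ∑ i, u i = 1) (hsv : ∑ i, v i = 1)
    (i₀ j₀ : Fin d) (hminu : ∀ i, u i₀ ≤ u i) (hminv : ∀ i, v j₀ ≤ v i) :
    u i₀ + v j₀ * (1 - (d:ℝ)*u i₀) ≤ ∑ i, u i * v i := by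
  have hterm : ∀ i ∈ (univ : Finset (Fin d)),
      u i₀ * v i + v j₀ * (u i - u i₀) ≤ u i * v i := by
    intro i _
    nlinarith [mul_nonneg (sub_nonneg.2 (hminv i)) (sub_nonneg.2 (hminu i))]
  have ha_sum : ∑ i, (u i - u i₀) = 1 - (d:ℝ)*u i₀ := by
    rw [Finset.sum_sub_distrib, hsu, sum_const_min]
  have e : ∑ i, (u i₀ * v i + v j₀ * (u i - u i₀)) = u i₀ + v j₀ * (1 - (d:ℝ)*u i₀) := by
    rw [Finset.sum_add_distrib, ← Finset.mul_sum, ← Finset.mul_sum, hsv, ha_sum, mul_one]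
  calc u i₀ + v j₀ * (1 - (d:ℝ)*u i₀) = ∑ i, (u i₀ * v i + v j₀ * (u i - u i₀)) := e.symm
    _ ≤ ∑ i, u i * v i := Finset.sum_le_sum hterm

/-- inner product lower bound via variances. -/
lemma ip2 {d : ℕ} (hd : 2 ≤ d) {u v : Fin d → ℝ}
    (hsu : ∑ i, u i = 1) (hsv : ∑ i, v i = 1) :
    1/(d:ℝ) - ((∑ i, (u i - 1/(d:ℝ))^2) + (∑ i, (v i - 1/(d:ℝ))^2))/2 ≤ ∑ i, u i * v i := by
  have hd0 : (0:ℝ) < (d:ℝ) := by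
    have : (0:ℕ) < d := by omega
    exact_mod_cast this
  have e : ∑ i, (u i - 1/(d:ℝ))*(v i - 1/(d:ℝ)) = (∑ i, u i * v i) - 1/(d:ℝ) := by
    have e1 : ∀ i ∈ (univ : Finset (Fin d)), (u i - 1/(d:ℝ))*(v i - 1/(d:ℝ))
        = (u i * v i - ((1/(d:ℝ))*u i + (1/(d:ℝ))*v i)) + (1/(d:ℝ))^2 := fun i _ => by ring
    rw [Finset.sum_congr rfl e1, Finset.sum_add_distrib, Finset.sum_sub_distrib,
      Finset.sum_add_distrib, ← Finset.mul_sum, ← Finset.mul_sum, hsu, hsv,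
      Finset.sum_const, card_univ, Fintype.card_fin, nsmul_eq_mul]
    field_simp
    ring
  have h0 : 0 ≤ ∑ i, ((u i - 1/(d:ℝ)) + (v i - 1/(d:ℝ)))^2 :=
    Finset.sum_nonneg fun i _ => sq_nonneg _
  have e2 : ∑ i, ((u i - 1/(d:ℝ)) + (v i - 1/(d:ℝ)))^2
      = (∑ i, (u i - 1/(d:ℝ))^2) + (∑ i, (v i - 1/(d:ℝ))^2)
        + 2 * ∑ i, (u i - 1/(d:ℝ))*(v i - 1/(d:ℝ)) := by
    rw [← Finset.sum_add_distrib, Finset.mul_sum, ← Finset.sum_add_distrib]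
    exact Finset.sum_congr rfl (fun i _ => by ring)
  rw [e2, e] at h0
  linarith

set_option maxHeartbeats 1000000 in
/-- strict inequality when `u` is far from uniform. -/
lemma farStrict {d : ℕ} (hd : 2 ≤ d) {β : ℝ} (hβ : 256 * (d:ℝ)^3 < β)
    {u v : Fin d → ℝ} (hu : ∀ i, 0 < u i) (hv : ∀ i, 0 < v i)
    (hsu : ∑ i, u i = 1) (hsv : ∑ i, v i = 1)
    (i₀ j₀ : Fin d) (hminu : ∀ i, u i₀ ≤ u i) (hminv : ∀ i, v j₀ ≤ v i)
    (hM : 1/(64*(d:ℝ)^3) < 1/(d:ℝ) - u i₀) :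
    (∑ i, u i * u i ^ (-β)) / (∑ i, u i ^ (-β))
      + (∑ i, v i * v i ^ (-β)) / (∑ i, v i ^ (-β)) < 2 * ∑ i, u i * v i := by
  have hd2 : (2:ℝ) ≤ (d:ℝ) := by exact_mod_cast hd
  have hd0 : (0:ℝ) < (d:ℝ) := by linarith
  have hcube : (4:ℝ)*(d:ℝ) ≤ (d:ℝ)^3 := by
    nlinarith [mul_nonneg (mul_nonneg (le_of_lt hd0) (by linarith : (0:ℝ) ≤ (d:ℝ) - 2))
      (by linarith : (0:ℝ) ≤ (d:ℝ) + 2)]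
  have hβ1 : (1:ℝ) ≤ β := by nlinarith [hcube, hd0]
  have hβ0 : (0:ℝ) < β := by linarith
  have hWu : 0 < ∑ i, u i ^ (-β) :=
    Finset.sum_pos (fun i _ => Real.rpow_pos_of_pos (hu i) _) ⟨i₀, mem_univ _⟩
  have hWv : 0 < ∑ i, v i ^ (-β) :=
    Finset.sum_pos (fun i _ => Real.rpow_pos_of_pos (hv i) _) ⟨j₀, mem_univ _⟩
  have hRu : (∑ i, u i * u i ^ (-β)) / (∑ i, u i ^ (-β)) ≤ u i₀ * (1 + (d:ℝ)/β) :=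
    (div_le_iff₀ hWu).mpr (minBound hd hβ1 hu i₀ hminu)
  have hRv : (∑ i, v i * v i ^ (-β)) / (∑ i, v i ^ (-β)) ≤ v j₀ * (1 + (d:ℝ)/β) :=
    (div_le_iff₀ hWv).mpr (minBound hd hβ1 hv j₀ hminv)
  have hip1 : u i₀ + v j₀ * (1 - (d:ℝ)*u i₀) ≤ ∑ i, u i * v i :=
    ip1 hsu hsv i₀ j₀ hminu hminv
  have hvu : ∑ i, v i * u i = ∑ i, u i * v i :=
    Finset.sum_congr rfl (fun i _ => mul_comm _ _)
  have hip2 : v j₀ + u i₀ * (1 - (d:ℝ)*v j₀) ≤ ∑ i, u i * v i := by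
    rw [← hvu]; exact ip1 hsv hsu j₀ i₀ hminv hminu
  have hm0 : 0 < u i₀ := hu i₀
  have hn0 : 0 < v j₀ := hv j₀
  have hdm : (d:ℝ) * u i₀ ≤ 1 := simplex_min_le hd hsu i₀ hminu
  have hdn : (d:ℝ) * v j₀ ≤ 1 := simplex_min_le hd hsv j₀ hminv
  have hmd : u i₀ ≤ 1/(d:ℝ) := by rw [le_div_iff₀ hd0]; linarith
  have hnd : v j₀ ≤ 1/(d:ℝ) := by rw [le_div_iff₀ hd0]; linarith
  -- key numeric inequality
  have key : u i₀ * ((d:ℝ)/β) + v j₀ * ((d:ℝ)/β)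
      < v j₀ * (1 - (d:ℝ)*u i₀) + u i₀ * (1 - (d:ℝ)*v j₀) := by
    have h1dm : 1/(64*(d:ℝ)^2) < 1 - (d:ℝ)*u i₀ := by
      have h2 : (d:ℝ) * (1/(64*(d:ℝ)^3)) < (d:ℝ) * (1/(d:ℝ) - u i₀) :=
        mul_lt_mul_of_pos_left hM hd0
      have e2 : (d:ℝ) * (1/(64*(d:ℝ)^3)) = 1/(64*(d:ℝ)^2) := by field_simp
      have e3 : (d:ℝ) * (1/(d:ℝ) - u i₀) = 1 - (d:ℝ) * u i₀ := by field_simp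
      linarith
    rcases le_or_gt (1/(2*(d:ℝ))) (v j₀) with hn | hn
    · -- n not too small
      have hsum : u i₀ + v j₀ ≤ 2/(d:ℝ) := by
        have e : 2/(d:ℝ) = 1/(d:ℝ) + 1/(d:ℝ) := by ring
        linarith
      have hdβ : (0:ℝ) ≤ (d:ℝ)/β := by positivity
      have a0 := mul_le_mul_of_nonneg_left hsum hdβ
      have ea : (d:ℝ)/β*(2/(d:ℝ)) = 2/β := by field_simp
      have ea2 : u i₀ * ((d:ℝ)/β) + v j₀ * ((d:ℝ)/β) = ((d:ℝ)/β)*(u i₀ + v j₀) := by ring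
      have a1 : u i₀ * ((d:ℝ)/β) + v j₀ * ((d:ℝ)/β) ≤ 2/β := by linarith
      have a2 : 2/β < 1/(128*(d:ℝ)^3) := by
        have h2 : 2/β < 2/(256*(d:ℝ)^3) :=
          div_lt_div_of_pos_left (by norm_num) (by positivity) hβ
        have e2 : 2/(256*(d:ℝ)^3) = 1/(128*(d:ℝ)^3) := by
          rw [div_eq_div_iff (by positivity) (by positivity)]; ring
        linarith
      have a3 : 1/(128*(d:ℝ)^3) ≤ v j₀*(1 - (d:ℝ)*u i₀) := by
        have b1 : v j₀ * (1/(64*(d:ℝ)^2)) ≤ v j₀*(1 - (d:ℝ)*u i₀) :=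
          mul_le_mul_of_nonneg_left (le_of_lt h1dm) (le_of_lt hn0)
        have b2 : (1/(2*(d:ℝ)))*(1/(64*(d:ℝ)^2)) ≤ v j₀ * (1/(64*(d:ℝ)^2)) :=
          mul_le_mul_of_nonneg_right hn (by positivity)
        have e4 : (1/(2*(d:ℝ)))*(1/(64*(d:ℝ)^2)) = 1/(128*(d:ℝ)^3) := by
          rw [div_mul_div_comm, div_eq_div_iff (by positivity) (by positivity)]; ring
        linarith
      have a4 : 0 ≤ u i₀*(1 - (d:ℝ)*v j₀) := mul_nonneg (le_of_lt hm0) (by linarith)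
      linarith
    · -- n small, so both coordinates are far from uniform
      have h64 : 64*(d:ℝ)^3 < β := by nlinarith
      have h1 : (d:ℝ)/β < 1/(64*(d:ℝ)^2) := by
        have h2 : (d:ℝ)/β < (d:ℝ)/(64*(d:ℝ)^3) :=
          div_lt_div_of_pos_left hd0 (by positivity) h64
        have e2 : (d:ℝ)/(64*(d:ℝ)^3) = 1/(64*(d:ℝ)^2) := by
          rw [div_eq_div_iff (by positivity) (by positivity)]; ring
        linarith
      have b1 : v j₀*((d:ℝ)/β) < v j₀*(1/(64*(d:ℝ)^2)) := mul_lt_mul_of_pos_left h1 hn0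
      have b2 : v j₀*(1/(64*(d:ℝ)^2)) < v j₀*(1 - (d:ℝ)*u i₀) := mul_lt_mul_of_pos_left h1dm hn0
      have h2d : 2*(d:ℝ) < β := by nlinarith
      have h3 : (d:ℝ)/β < 1/2 := by
        have h4 : (d:ℝ)/β < (d:ℝ)/(2*(d:ℝ)) :=
          div_lt_div_of_pos_left hd0 (by positivity) h2d
        have e4 : (d:ℝ)/(2*(d:ℝ)) = 1/2 := by
          rw [div_eq_div_iff (by positivity) (by norm_num)]; ring
        linarith
      have b3 : u i₀*((d:ℝ)/β) < u i₀*(1/2) := mul_lt_mul_of_pos_left h3 hm0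
      have h5 : (d:ℝ)*v j₀ < 1/2 := by
        have h6 : (d:ℝ)*v j₀ < (d:ℝ)*(1/(2*(d:ℝ))) := mul_lt_mul_of_pos_left hn hd0
        have e6 : (d:ℝ)*(1/(2*(d:ℝ))) = 1/2 := by field_simp
        linarith
      have b4 : u i₀*(1/2) < u i₀*(1 - (d:ℝ)*v j₀) := mul_lt_mul_of_pos_left (by linarith) hm0
      linarith
  calc (∑ i, u i * u i ^ (-β)) / (∑ i, u i ^ (-β))
      + (∑ i, v i * v i ^ (-β)) / (∑ i, v i ^ (-β))
      ≤ u i₀ * (1 + (d:ℝ)/β) + v j₀ * (1 + (d:ℝ)/β) := by linarith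
    _ = (u i₀ + v j₀) + (u i₀ * ((d:ℝ)/β) + v j₀ * ((d:ℝ)/β)) := by ring
    _ < (u i₀ + v j₀) + (v j₀ * (1 - (d:ℝ)*u i₀) + u i₀ * (1 - (d:ℝ)*v j₀)) := by linarith
    _ ≤ 2 * ∑ i, u i * v i := by linarith

end Stmt10Aux

open Stmt10Aux in
/-- Proposition 1: for every `d ≥ 2` there is `α(d) > 0` such that for
`α > α(d)` and `u, v` in the open simplex,
`2 ∑ u_i v_i ≥ (∑ u_i^{−α})/(∑ u_i^{−(1+α)}) + (∑ v_i^{−α})/(∑ v_i^{−(1+α)})`,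
with equality iff `u = v = (1/d, …, 1/d)`. -/
theorem stmt_10 (d : ℕ) (hd : 2 ≤ d) :
    ∃ A : ℝ, 0 < A ∧ ∀ α : ℝ, A < α →
      ∀ u v : Fin d → ℝ, (∀ i, 0 < u i) → (∀ i, 0 < v i) →
        ∑ i, u i = 1 → ∑ i, v i = 1 →
        ((∑ i, u i ^ (-α)) / (∑ i, u i ^ (-(1 + α))) +
            (∑ i, v i ^ (-α)) / (∑ i, v i ^ (-(1 + α))) ≤ 2 * ∑ i, u i * v i ∧
          (2 * ∑ i, u i * v i =
              (∑ i, u i ^ (-α)) / (∑ i, u i ^ (-(1 + α))) +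
                (∑ i, v i ^ (-α)) / (∑ i, v i ^ (-(1 + α))) ↔
            (u = fun _ => 1 / (d : ℝ)) ∧ (v = fun _ => 1 / (d : ℝ)))) := by
  have hd2 : (2:ℝ) ≤ (d:ℝ) := by exact_mod_cast hd
  have hd0 : (0:ℝ) < (d:ℝ) := by linarith
  refine ⟨256*(d:ℝ)^3, by positivity, ?_⟩
  intro α hα u v hu hv hsu hsv
  set β : ℝ := 1 + α with hβ_def
  have hβ : 256*(d:ℝ)^3 < β := by
    have h0 : (0:ℝ) < 256*(d:ℝ)^3 := by positivity
    rw [hβ_def]; linarith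
  have h64 : 64*(d:ℝ)^3 < β := by nlinarith [pow_pos hd0 3]
  -- rewrite the numerators
  have hnu : ∀ i, u i ^ (-α) = u i * u i ^ (-β) := by
    intro i
    rw [show -α = 1 + (-β) by rw [hβ_def]; ring, Real.rpow_add (hu i), Real.rpow_one]
  have hnv : ∀ i, v i ^ (-α) = v i * v i ^ (-β) := by
    intro i
    rw [show -α = 1 + (-β) by rw [hβ_def]; ring, Real.rpow_add (hv i), Real.rpow_one]
  simp only [hnu, hnv]
  -- minima
  obtain ⟨i₀, -, hminu⟩ :=
    Finset.exists_min_image (univ : Finset (Fin d)) u ⟨⟨0, by omega⟩, mem_univ _⟩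
  obtain ⟨j₀, -, hminv⟩ :=
    Finset.exists_min_image (univ : Finset (Fin d)) v ⟨⟨0, by omega⟩, mem_univ _⟩
  have hminu' : ∀ i, u i₀ ≤ u i := fun i => hminu i (mem_univ i)
  have hminv' : ∀ i, v j₀ ≤ v i := fun i => hminv i (mem_univ i)
  have hWu : 0 < ∑ i, u i ^ (-β) :=
    Finset.sum_pos (fun i _ => Real.rpow_pos_of_pos (hu i) _) ⟨i₀, mem_univ _⟩
  have hWv : 0 < ∑ i, v i ^ (-β) :=
    Finset.sum_pos (fun i _ => Real.rpow_pos_of_pos (hv i) _) ⟨j₀, mem_univ _⟩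
  have hσu0 : 0 ≤ ∑ i, (u i - 1/(d:ℝ))^2 := Finset.sum_nonneg fun i _ => sq_nonneg _
  have hσv0 : 0 ≤ ∑ i, (v i - 1/(d:ℝ))^2 := Finset.sum_nonneg fun i _ => sq_nonneg _
  have huv : ∑ i, v i * u i = ∑ i, u i * v i :=
    Finset.sum_congr rfl (fun i _ => mul_comm _ _)
  by_cases hMu : 1/(d:ℝ) - u i₀ ≤ 1/(64*(d:ℝ)^3)
  · by_cases hMv : 1/(d:ℝ) - v j₀ ≤ 1/(64*(d:ℝ)^3)
    · -- both near uniform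
      have R1 : (∑ i, u i * u i ^ (-β)) / (∑ i, u i ^ (-β))
          ≤ 1/(d:ℝ) - 2 * ∑ i, (u i - 1/(d:ℝ))^2 :=
        (div_le_iff₀ hWu).mpr (near hd h64 hu hsu i₀ hminu' hMu)
      have R2 : (∑ i, v i * v i ^ (-β)) / (∑ i, v i ^ (-β))
          ≤ 1/(d:ℝ) - 2 * ∑ i, (v i - 1/(d:ℝ))^2 :=
        (div_le_iff₀ hWv).mpr (near hd h64 hv hsv j₀ hminv' hMv)
      have hip := ip2 hd hsu hsv
      refine ⟨by linarith, ?_, ?_⟩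
      · intro heq
        have hσu : (∑ i, (u i - 1/(d:ℝ))^2) = 0 := by linarith
        have hσv : (∑ i, (v i - 1/(d:ℝ))^2) = 0 := by linarith
        constructor
        · funext i
          have h := (Finset.sum_eq_zero_iff_of_nonneg
            (fun i _ => sq_nonneg (u i - 1/(d:ℝ)))).mp hσu i (mem_univ i)
          have h2 : u i - 1/(d:ℝ) = 0 := by
            have := sq_eq_zero_iff.mp h
            exact this
          linarith [h2]
        · funext i
          have h := (Finset.sum_eq_zero_iff_of_nonneg
            (fun i _ => sq_nonneg (v i - 1/(d:ℝ)))).mp hσv i (mem_univ i)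
          have h2 : v i - 1/(d:ℝ) = 0 := sq_eq_zero_iff.mp h
          linarith [h2]
      · rintro ⟨hue, hve⟩
        have hc : (0:ℝ) < (1/(d:ℝ))^(-β) := Real.rpow_pos_of_pos (by positivity) _
        simp only [hue, hve]
        rw [sum_const_min, sum_const_min, sum_const_min]
        field_simp
        ring
    · -- v far from uniform
      push_neg at hMv
      have hfar := farStrict hd hβ hv hu hsv hsu j₀ i₀ hminv' hminu' hMv
      rw [huv] at hfar
      refine ⟨by linarith, ?_, ?_⟩
      · intro heq; exfalso; linarith
      · rintro ⟨hue, hve⟩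
        exfalso
        have : v j₀ = 1/(d:ℝ) := by rw [hve]
        rw [this] at hMv
        have h0 : (0:ℝ) < 1/(64*(d:ℝ)^3) := by positivity
        linarith
  · -- u far from uniform
    push_neg at hMu
    have hfar := farStrict hd hβ hu hv hsu hsv i₀ j₀ hminu' hminv' hMu
    refine ⟨by linarith, ?_, ?_⟩
    · intro heq; exfalso; linarith
    · rintro ⟨hue, hve⟩
      exfalso
      have : u i₀ = 1/(d:ℝ) := by rw [hue]
      rw [this] at hMu
      have h0 : (0:ℝ) < 1/(64*(d:ℝ)^3) := by positivity
      linarith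
end

section
/- For every α > 0, every integer d ≥ 2, and all real numbers a_1, …, a_{d−1} ∈ (0,1], one has (1 + ∑_{i=1}^{d−1} a_i^α)/(1 + ∑_{i=1}^{d−1} a_i^{1+α}) < d^{1/(α+1)}. -/
open Finset

lemma holder_aux (α : ℝ) (hα : 0 < α) (n : ℕ) (hn : 2 ≤ n) (x : Fin n → ℝ)
    (hx : ∀ i, x i ∈ Set.Ioc (0 : ℝ) 1) (i0 : Fin n) (hx0 : x i0 = 1) :
    (∑ i, x i ^ α) / (∑ i, x i ^ (1 + α)) < (n : ℝ) ^ ((1 : ℝ) / (α + 1)) := by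
  set N := ∑ i, x i ^ (1 + α) with hN
  set S := ∑ i, x i ^ α with hS
  have hxpos : ∀ i, 0 < x i := fun i => (hx i).1
  have hterm : ∀ i, 0 < x i ^ (1 + α) := fun i => Real.rpow_pos_of_pos (hxpos i) _
  obtain ⟨j, hj⟩ : ∃ j : Fin n, j ≠ i0 := by
    have : Nontrivial (Fin n) := Fin.nontrivial_iff_two_le.mpr hn
    exact exists_ne i0
  have hN1 : 1 < N := by
    have h1 : x i0 ^ (1 + α) = 1 := by rw [hx0, Real.one_rpow]
    calc (1 : ℝ) < x i0 ^ (1 + α) + x j ^ (1 + α) := by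
          rw [h1]; linarith [hterm j]
      _ ≤ N := by
          rw [hN]
          have h2 := Finset.add_sum_erase Finset.univ (fun i => x i ^ (1 + α))
            (Finset.mem_univ i0)
          rw [← h2]
          have hjmem : j ∈ Finset.univ.erase i0 := Finset.mem_erase.2 ⟨hj, Finset.mem_univ j⟩
          have := Finset.single_le_sum (f := fun i => x i ^ (1 + α))
            (fun i _ => le_of_lt (hterm i)) hjmem
          linarith
  have hNpos : 0 < N := by linarith
  have hpq : Real.HolderConjugate (α + 1) ((α + 1) / α) := by
    rw [Real.holderConjugate_iff]
    constructor
    · linarith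
    · field_simp
      ring
  have holder : S ≤ (n : ℝ) ^ ((1:ℝ) / (α + 1)) * N ^ (α / (α + 1)) := by
    have h := Real.inner_le_Lp_mul_Lq_of_nonneg (s := Finset.univ)
      (f := fun _ : Fin n => (1 : ℝ)) (g := fun i => x i ^ α) hpq
      (fun i _ => zero_le_one) (fun i _ => le_of_lt (Real.rpow_pos_of_pos (hxpos i) _))
    simp only [one_mul, Real.one_rpow, Finset.sum_const, Finset.card_univ,
      Fintype.card_fin, nsmul_eq_mul, mul_one] at h
    have heq : ∀ i : Fin n, (x i ^ α) ^ ((α + 1) / α) = x i ^ (1 + α) := by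
      intro i
      rw [← Real.rpow_mul (le_of_lt (hxpos i))]
      congr 1
      field_simp
      ring
    rw [Finset.sum_congr rfl (fun i _ => heq i)] at h
    have hq : 1 / ((α + 1) / α) = α / (α + 1) := by
      field_simp
    rw [hq] at h
    exact h
  have hNlt : N ^ (α / (α + 1)) < N := by
    calc N ^ (α / (α + 1)) < N ^ (1 : ℝ) := by
          apply Real.rpow_lt_rpow_of_exponent_lt hN1
          rw [div_lt_one (by linarith)]; linarith
      _ = N := Real.rpow_one N
  have hnpos : (0 : ℝ) < (n : ℝ) ^ ((1:ℝ) / (α + 1)) :=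
    Real.rpow_pos_of_pos (by positivity) _
  rw [div_lt_iff₀ hNpos]
  calc S ≤ (n : ℝ) ^ ((1:ℝ) / (α + 1)) * N ^ (α / (α + 1)) := holder
    _ < (n : ℝ) ^ ((1:ℝ) / (α + 1)) * N := by
        exact mul_lt_mul_of_pos_left hNlt hnpos

/-- for `α > 0`, `d ≥ 2` and `a_1, …, a_{d-1} ∈ (0,1]`,
`(1 + ∑ a_i^α)/(1 + ∑ a_i^(1+α)) < d^(1/(α+1))`. -/
theorem stmt_11 (α : ℝ) (hα : 0 < α) (d : ℕ) (hd : 2 ≤ d)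
    (a : Fin (d - 1) → ℝ) (ha : ∀ i, a i ∈ Set.Ioc (0 : ℝ) 1) :
    (1 + ∑ i, a i ^ α) / (1 + ∑ i, a i ^ (1 + α)) < (d : ℝ) ^ ((1 : ℝ) / (α + 1)) := by
  have hx : ∀ i : Fin (d - 1 + 1), (Fin.cons (1 : ℝ) a : Fin (d - 1 + 1) → ℝ) i ∈ Set.Ioc (0 : ℝ) 1 := by
    intro i
    refine Fin.cases ?_ ?_ i
    · simp
    · intro j; simpa using ha j
  have h := holder_aux α hα (d - 1 + 1) (by omega) (Fin.cons 1 a) hx 0 (by simp)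
  rw [Fin.sum_univ_succ, Fin.sum_univ_succ] at h
  simp only [Fin.cons_zero, Fin.cons_succ, Real.one_rpow] at h
  have hd1 : d - 1 + 1 = d := by omega
  rw [hd1] at h
  exact h
end
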